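/- arXiv:0802.1925 — 4 statements merged into one kernel-verified Lean document; each statement's English description precedes it below -/
import Mathlib

section
/- If Ψ : ℕ → ℝ₊ is monotonically decreasing and ∑_{h=1}^∞ Ψ(h) diverges, then the function Ψ̃ defined by Ψ̃(x) = x^{-n/(n+1)} Ψ(x^{1/(n+1)}) satisfies ∑_{h=1}^∞ Ψ̃(h) = ∞, for any fixed positive integer n. -/
theorem stmt_2 (Ψ : ℕ → ℝ) (hpos : ∀ h, 0 < Ψ h)
    (hmono : ∀ m n : ℕ, m ≤ n → Ψ n ≤ Ψ m)
    (n : ℕ) (hn : 1 ≤ n)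
    (hdiv : ¬ Summable Ψ) :
    ¬ Summable (fun h : ℕ =>
      (h : ℝ) ^ (-(n : ℝ) / (n + 1)) * Ψ ⌈(h : ℝ) ^ ((1 : ℝ) / (n + 1))⌉₊) := by
  intro hs
  set f : ℕ → ℝ := fun h =>
    (h : ℝ) ^ (-(n : ℝ) / (n + 1)) * Ψ ⌈(h : ℝ) ^ ((1 : ℝ) / (n + 1))⌉₊ with hf
  have hfnn : ∀ h, 0 ≤ f h := fun h =>
    mul_nonneg (Real.rpow_nonneg (Nat.cast_nonneg h) _) (hpos _).le
  have hblock : ∀ k : ℕ,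
      Ψ (k + 2) ≤ ∑ h ∈ Finset.Ico ((k+1)^(n+1)) ((k+2)^(n+1)), f h := by
    intro k
    have hMpos : (0:ℝ) < ((k:ℝ) + 2) := by positivity
    have hexp : ((n:ℝ) + 1) * (-(n : ℝ) / (n + 1)) = -(n:ℝ) := by
      field_simp
    have hbase : (((k:ℝ)+2) ^ ((n+1 : ℕ) : ℝ)) ^ (-(n : ℝ) / (n + 1))
        = ((k:ℝ)+2) ^ (-(n:ℝ)) := by
      rw [← Real.rpow_mul hMpos.le]
      push_cast
      rw [hexp]
    have hterm : ∀ h ∈ Finset.Ico ((k+1)^(n+1)) ((k+2)^(n+1)),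
        ((k:ℝ)+2) ^ (-(n:ℝ)) * Ψ (k + 2) ≤ f h := by
      intro h hh
      simp only [Finset.mem_Ico] at hh
      have hh1 : 1 ≤ h := le_trans (Nat.one_le_pow _ _ (by omega)) hh.1
      have hhpos : (0:ℝ) < h := by exact_mod_cast hh1
      have hhM : (h:ℝ) ≤ ((k:ℝ)+2) ^ (n+1 : ℕ) := by
        have := hh.2.le
        calc (h:ℝ) ≤ (((k+2)^(n+1) : ℕ) : ℝ) := by exact_mod_cast this
          _ = ((k:ℝ)+2) ^ (n+1 : ℕ) := by push_cast; ring
      have hceil : ⌈(h:ℝ) ^ ((1:ℝ)/(n+1))⌉₊ ≤ k + 2 := by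
        rw [Nat.ceil_le]
        have : (h:ℝ) ^ ((1:ℝ)/(n+1)) ≤ (((k:ℝ)+2) ^ ((n+1:ℕ):ℝ)) ^ ((1:ℝ)/(n+1)) := by
          rw [Real.rpow_natCast]
          exact Real.rpow_le_rpow hhpos.le hhM (by positivity)
        push_cast
        calc (h:ℝ) ^ ((1:ℝ)/(n+1)) ≤ (((k:ℝ)+2) ^ ((n+1:ℕ):ℝ)) ^ ((1:ℝ)/(n+1)) := this
          _ = ((k:ℝ)+2) := by
            rw [← Real.rpow_mul hMpos.le]
            push_cast
            rw [mul_one_div, div_self (by positivity), Real.rpow_one]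
      have hpow : ((k:ℝ)+2) ^ (-(n:ℝ)) ≤ (h:ℝ) ^ (-(n : ℝ) / (n + 1)) := by
        rw [← hbase, Real.rpow_natCast]
        refine Real.rpow_le_rpow_of_nonpos hhpos hhM ?_
        have : (0:ℝ) ≤ (n:ℝ) / (n+1) := by positivity
        simpa [neg_div] using neg_nonpos.mpr this
      have := mul_le_mul hpow (hmono _ _ hceil) (hpos _).le
        (Real.rpow_nonneg hhpos.le _)
      simpa [hf] using this
    have hcard : (k+2)^n ≤ (Finset.Ico ((k+1)^(n+1)) ((k+2)^(n+1))).card := by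
      rw [Nat.card_Ico]
      have h1 : (k+1)^(n+1) ≤ (k+1) * (k+2)^n := by
        rw [pow_succ']
        exact Nat.mul_le_mul_left _ (Nat.pow_le_pow_left (by omega) n)
      have h2 : (k+1) * (k+2)^n + (k+2)^n = (k+2)^(n+1) := by
        rw [pow_succ']; ring
      omega
    have hsumge := Finset.card_nsmul_le_sum _ _ _ hterm
    rw [nsmul_eq_mul] at hsumge
    refine le_trans ?_ hsumge
    have hone : ((k:ℝ)+2) ^ ((n:ℕ):ℝ) * (((k:ℝ)+2) ^ (-(n:ℝ)) * Ψ (k+2)) = Ψ (k+2) := by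
      rw [← mul_assoc, ← Real.rpow_add hMpos]
      simp
    calc Ψ (k + 2)
        = ((k:ℝ)+2) ^ ((n:ℕ):ℝ) * (((k:ℝ)+2) ^ (-(n:ℝ)) * Ψ (k+2)) := hone.symm
      _ ≤ ((Finset.Ico ((k+1)^(n+1)) ((k+2)^(n+1))).card : ℝ)
            * (((k:ℝ)+2) ^ (-(n:ℝ)) * Ψ (k+2)) := by
          refine mul_le_mul_of_nonneg_right ?_
            (mul_nonneg (Real.rpow_nonneg hMpos.le _) (hpos _).le)
          rw [Real.rpow_natCast]
          calc ((k:ℝ)+2) ^ n = (((k+2)^n : ℕ) : ℝ) := by push_cast; ring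
            _ ≤ _ := by exact_mod_cast hcard
  have key : ∀ N : ℕ, ∑ k ∈ Finset.range N, Ψ (k + 2)
      ≤ ∑ h ∈ Finset.Ico (1^(n+1)) ((N+1)^(n+1)), f h := by
    intro N
    induction N with
    | zero => simp
    | succ N ih =>
      rw [Finset.sum_range_succ]
      have hcons : ∑ h ∈ Finset.Ico (1^(n+1)) ((N+1)^(n+1)), f h
          + ∑ h ∈ Finset.Ico ((N+1)^(n+1)) ((N+2)^(n+1)), f h
          = ∑ h ∈ Finset.Ico (1^(n+1)) ((N+2)^(n+1)), f h :=
        Finset.sum_Ico_consecutive _ (Nat.pow_le_pow_left (by omega) _)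
          (Nat.pow_le_pow_left (by omega) _)
      calc ∑ k ∈ Finset.range N, Ψ (k + 2) + Ψ (N + 2)
          ≤ ∑ h ∈ Finset.Ico (1^(n+1)) ((N+1)^(n+1)), f h
            + ∑ h ∈ Finset.Ico ((N+1)^(n+1)) ((N+2)^(n+1)), f h :=
            add_le_add ih (hblock N)
        _ = _ := hcons
  have hsum : ∀ N : ℕ, ∑ k ∈ Finset.range N, Ψ (k + 2) ≤ ∑' h, f h := fun N =>
    (key N).trans (Summable.sum_le_tsum _ (fun h _ => hfnn h) hs)
  have hS : Summable (fun k => Ψ (k + 2)) :=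
    summable_of_sum_range_le (fun k => (hpos _).le) hsum
  exact hdiv ((summable_nat_add_iff 2).mp hS)
end

section
/- Let P ∈ ℤ[x] be a nonzero polynomial, ω ∈ ℚ_p, and let α be a root of P (in an algebraic closure of ℚ_p, with the extended p-adic valuation) that is nearest to ω among all roots of P. If P'(α) ≠ 0, then |ω − α|_p ≤ |P(ω)|_p / |P'(α)|_p. -/
open Polynomial

theorem stmt_5 (p : ℕ) [Fact p.Prime]
    (L : Type*) [NormedField L] [Algebra ℚ_[p] L] [IsAlgClosed L] [IsUltrametricDist L]
    (hext : ∀ x : ℚ_[p], ‖(algebraMap ℚ_[p] L) x‖ = ‖x‖)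
    (P : Polynomial ℤ) (hP : P ≠ 0) (ω : ℚ_[p]) (α : L)
    (hroot : Polynomial.aeval α P = 0)
    (hnear : ∀ β : L, Polynomial.aeval β P = 0 →
      ‖algebraMap ℚ_[p] L ω - α‖ ≤ ‖algebraMap ℚ_[p] L ω - β‖)
    (hP' : Polynomial.aeval α (Polynomial.derivative P) ≠ 0) :
    ‖algebraMap ℚ_[p] L ω - α‖ ≤
      ‖Polynomial.aeval ω P‖ / ‖Polynomial.aeval α (Polynomial.derivative P)‖ := by
  classical
  haveI : CharZero L := charZero_of_injective_algebraMap (algebraMap ℚ_[p] L).injective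
  set ω' : L := algebraMap ℚ_[p] L ω with hω'
  set Q : L[X] := P.map (algebraMap ℤ L) with hQ
  have hQ0 : Q ≠ 0 := by
    rw [hQ, Ne, Polynomial.map_eq_zero_iff (algebraMap ℤ L).injective_int]
    exact hP
  have hQeval : ∀ x : L, Q.eval x = Polynomial.aeval x P := by
    intro x; rw [hQ, Polynomial.eval_map]; rfl
  have hsplit : Q.Splits := IsAlgClosed.splits Q
  have hαroot : α ∈ Q.roots := by
    rw [Polynomial.mem_roots hQ0, Polynomial.IsRoot, hQeval]; exact hroot
  set s : Multiset L := Q.roots.erase α with hs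
  have hcons : α ::ₘ s = Q.roots := Multiset.cons_erase hαroot
  set c : L := Q.leadingCoeff with hc
  have hc0 : c ≠ 0 := Polynomial.leadingCoeff_ne_zero.mpr hQ0
  set R : L[X] := (s.map fun β => X - C β).prod with hR
  have hQfac : Q = C c * ((X - C α) * R) := by
    conv_lhs => rw [hsplit.eq_prod_roots]
    rw [← hcons]; simp [hR, hc]
  -- evaluate Q at ω'
  have hevalω : Q.eval ω' = c * ((ω' - α) * (s.map fun β => ω' - β).prod) := by
    rw [hQfac]
    simp [hR, Polynomial.eval_multiset_prod, Multiset.map_map, Function.comp_def]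
  -- derivative at α
  have hderiv : (derivative Q).eval α = c * (s.map fun β => α - β).prod := by
    rw [hQfac, derivative_mul, derivative_mul, derivative_C, derivative_sub,
      derivative_X, derivative_C]
    simp [hR, Polynomial.eval_multiset_prod, Multiset.map_map, Function.comp_def]
  have hderivQ : (derivative Q).eval α = Polynomial.aeval α (derivative P) := by
    rw [hQ, Polynomial.derivative_map, Polynomial.eval_map]; rfl
  -- norms of multiset products
  have hnormprod : ∀ (m : Multiset L), ‖m.prod‖ = (m.map fun x => ‖x‖).prod := by
    intro m
    induction m using Multiset.induction with
    | empty => simp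
    | cons a m ih => simp [ih]
  -- pointwise comparison
  have hpt : ∀ β ∈ s, ‖α - β‖ ≤ ‖ω' - β‖ := by
    intro β hβ
    have hβroot : Polynomial.aeval β P = 0 := by
      rw [hs] at hβ
      have : β ∈ Q.roots := Multiset.mem_of_mem_erase hβ
      rw [Polynomial.mem_roots hQ0, Polynomial.IsRoot, hQeval] at this
      exact this
    have h1 : ‖ω' - α‖ ≤ ‖ω' - β‖ := hnear β hβroot
    calc ‖α - β‖ = ‖(α - ω') + (ω' - β)‖ := by ring_nf
      _ ≤ max ‖α - ω'‖ ‖ω' - β‖ := IsUltrametricDist.norm_add_le_max _ _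
      _ ≤ ‖ω' - β‖ := by
          rw [norm_sub_rev] at h1
          exact max_le h1 le_rfl
  have hprodle : ((s.map fun β => α - β).map fun x => ‖x‖).prod ≤
      ((s.map fun β => ω' - β).map fun x => ‖x‖).prod := by
    rw [Multiset.map_map, Multiset.map_map]
    exact Multiset.prod_map_le_prod_map₀ _ _ (fun i _ => norm_nonneg _) hpt
  -- key inequality on norms
  have hkey : ‖ω' - α‖ * ‖Polynomial.aeval α (derivative P)‖ ≤ ‖Polynomial.aeval ω P‖ := by
    have hQω : Q.eval ω' = algebraMap ℚ_[p] L (Polynomial.aeval ω P) := by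
      rw [hQeval, hω', Polynomial.aeval_algebraMap_apply]
    have hr : ‖Polynomial.aeval ω P‖ = ‖Q.eval ω'‖ := by rw [hQω, hext]
    rw [hr, ← hderivQ, hevalω, hderiv, norm_mul, norm_mul, norm_mul]
    rw [hnormprod, hnormprod]
    calc ‖ω' - α‖ * (‖c‖ * ((s.map fun β => α - β).map fun x => ‖x‖).prod)
        ≤ ‖ω' - α‖ * (‖c‖ * ((s.map fun β => ω' - β).map fun x => ‖x‖).prod) := by
          gcongr
      _ = ‖c‖ * (‖ω' - α‖ * ((s.map fun β => ω' - β).map fun x => ‖x‖).prod) := by ring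
  have hd : 0 < ‖Polynomial.aeval α (derivative P)‖ := norm_pos_iff.mpr hP'
  rw [le_div_iff₀ hd]
  exact hkey
end

section
/- Let p be prime and n ≥ 1. For each ω ∈ ℤ_p, each δ ∈ (0,1], and each sufficiently large Q, there exists a nonzero polynomial P(x) = a_n x^n + ⋯ + a_1 x + a_0 ∈ ℤ[x] such that |P(ω)|_p < δ² C Q^{-n-1}, |a_j| ≤ δ^{-1} Q for all 0 ≤ j ≤ n, and |a_j|_p ≤ δ for all 2 ≤ j ≤ n, where C > 0 is an absolute constant (depending only on n and p). -/
set_option maxHeartbeats 2000000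

open Polynomial

private def eAux (p k : ℕ) (j v : ℕ) : ℤ := if j < 2 then (v : ℤ) else (p : ℤ) ^ k * v

private lemma eAux_inj (p k : ℕ) (hp : 0 < p) {j v w : ℕ}
    (h : eAux p k j v = eAux p k j w) : v = w := by
  unfold eAux at h
  split at h
  · exact_mod_cast h
  · have hpk : ((p : ℤ) ^ k) ≠ 0 := by positivity
    have := mul_left_cancel₀ hpk h
    exact_mod_cast this

theorem stmt_11 (p n : ℕ) [Fact p.Prime] (hn : 1 ≤ n) :
    ∃ C : ℝ, 0 < C ∧ ∀ δ : ℝ, 0 < δ → δ ≤ 1 → ∃ Q₀ : ℝ, ∀ Q : ℝ, Q₀ ≤ Q →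
      ∀ ω : ℤ_[p], ∃ P : Polynomial ℤ, P ≠ 0 ∧ P.natDegree ≤ n ∧
        ‖Polynomial.aeval ω P‖ < δ ^ 2 * C * Q ^ (-(n : ℤ) - 1) ∧
        (∀ j ≤ n, (|P.coeff j| : ℝ) ≤ δ⁻¹ * Q) ∧
        (∀ j, 2 ≤ j → j ≤ n → ‖((P.coeff j : ℤ_[p]))‖ ≤ δ) := by
  obtain ⟨m, rfl⟩ : ∃ m, n = m + 1 := ⟨n - 1, (Nat.succ_pred_eq_of_pos hn).symm⟩
  have hp : p.Prime := Fact.out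
  have hp1 : 1 < p := hp.one_lt
  have hpR : (1 : ℝ) < p := by exact_mod_cast hp1
  have hpR0 : (0 : ℝ) < p := by positivity
  refine ⟨(p : ℝ) ^ (m + 2), by positivity, ?_⟩
  intro δ hδ hδ1
  refine ⟨1, fun Q hQ ω => ?_⟩
  have hQ0 : (0 : ℝ) < Q := lt_of_lt_of_le one_pos hQ
  have hδi : (1 : ℝ) ≤ δ⁻¹ := by
    rw [le_inv_comm₀ one_pos hδ]
    simpa using hδ1
  have hδi0 : (0 : ℝ) < δ⁻¹ := by positivity
  have hδQ : (1 : ℝ) ≤ δ⁻¹ * Q := by nlinarith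
  -- choose k
  obtain ⟨k, hk1, hk2⟩ : ∃ k : ℕ, δ⁻¹ ≤ (p : ℝ) ^ k ∧ (p : ℝ) ^ k ≤ p * δ⁻¹ := by
    have hex : ∃ k : ℕ, δ⁻¹ ≤ (p : ℝ) ^ k :=
      (pow_unbounded_of_one_lt δ⁻¹ hpR).imp fun k h => h.le
    refine ⟨Nat.find hex, Nat.find_spec hex, ?_⟩
    rcases Nat.eq_zero_or_pos (Nat.find hex) with h0 | h0
    · rw [h0, pow_zero]; nlinarith
    · have hmin := Nat.find_min hex (Nat.sub_lt h0 one_pos)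
      push_neg at hmin
      calc (p : ℝ) ^ Nat.find hex = p * p ^ (Nat.find hex - 1) := by
            rw [← pow_succ']
            congr 1
            omega
        _ ≤ p * δ⁻¹ := by nlinarith [hmin.le]
  have hpk0 : (0 : ℝ) < (p : ℝ) ^ k := by positivity
  have hpkδ : ((p : ℝ) ^ k)⁻¹ ≤ δ := by
    have := inv_anti₀ hδi0 hk1
    rwa [inv_inv] at this
  -- the coefficient ranges
  set A : ℕ := ⌊δ⁻¹ * Q⌋₊ + 1 with hAdef
  set B : ℕ := ⌊δ⁻¹ * Q / (p : ℝ) ^ k⌋₊ + 1 with hBdef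
  have hA1 : δ⁻¹ * Q < A := by
    rw [hAdef]; push_cast
    exact Nat.lt_floor_add_one _
  have hA2 : (A : ℝ) ≤ δ⁻¹ * Q + 1 := by
    have := Nat.floor_le (show (0 : ℝ) ≤ δ⁻¹ * Q by positivity)
    rw [hAdef]; push_cast
    linarith
  have hA3 : 2 ≤ A := by
    have : 1 ≤ ⌊δ⁻¹ * Q⌋₊ := Nat.le_floor (by exact_mod_cast hδQ)
    omega
  have hB1 : δ⁻¹ * Q / (p : ℝ) ^ k < B := by
    rw [hBdef]; push_cast
    exact Nat.lt_floor_add_one _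
  have hB2 : (B : ℝ) ≤ δ⁻¹ * Q / (p : ℝ) ^ k + 1 := by
    have := Nat.floor_le (show (0 : ℝ) ≤ δ⁻¹ * Q / (p : ℝ) ^ k by positivity)
    rw [hBdef]; push_cast
    linarith
  have hBQ : Q / (p : ℝ) ≤ B := by
    refine le_trans ?_ hB1.le
    rw [div_le_div_iff₀ hpR0 hpk0]
    nlinarith
  have hBQ0 : (0 : ℝ) < Q / (p : ℝ) := by positivity
  -- pigeonhole counting
  set N : ℕ := A ^ 2 * B ^ m with hNdef
  have hB0 : 0 < B := by omega
  have hN2 : 2 ≤ N := by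
    have h1 : 0 < B ^ m := pow_pos hB0 m
    calc 2 ≤ A := hA3
      _ ≤ A ^ 2 := Nat.le_self_pow two_ne_zero A
      _ ≤ A ^ 2 * B ^ m := Nat.le_mul_of_pos_right _ h1
  set M : ℕ := Nat.log p (N - 1) with hMdef
  have hMN : p ^ M < N := by
    have h := Nat.pow_log_le_self p (show N - 1 ≠ 0 by omega)
    rw [← hMdef] at h
    omega
  have hNM : N ≤ p ^ (M + 1) := by
    have h : N - 1 < p ^ (M + 1) := by
      rw [hMdef]
      exact Nat.lt_pow_succ_log_self hp1 (N - 1)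
    omega
  -- the finite family
  set c : Fin (m + 2) → ℕ := fun j => if (j : ℕ) < 2 then A else B with hcdef
  have hprod : ∏ j : Fin (m + 2), c j = N := by
    have h1 : ∏ j : Fin (m + 2), c j
        = ∏ j ∈ Finset.range (m + 2), (if j < 2 then A else B) := by
      rw [hcdef]
      exact Fin.prod_univ_eq_prod_range (fun j => if j < 2 then A else B) (m + 2)
    have h2 : ∀ i, (if 2 + i < 2 then A else B) = B := fun i => if_neg (by omega)
    rw [h1, show m + 2 = 2 + m by ring, Finset.prod_range_add]
    simp only [h2, Finset.prod_const, Finset.card_range, Finset.prod_range_succ,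
      Finset.prod_range_zero, one_mul]
    rw [if_pos (by omega : (0:ℕ) < 2), if_pos (by omega : (1:ℕ) < 2), hNdef]
    ring
  haveI : NeZero (p ^ M) := ⟨pow_ne_zero _ hp.pos.ne'⟩
  set F : (∀ j : Fin (m + 2), Fin (c j)) → ZMod (p ^ M) := fun d =>
    PadicInt.toZModPow M (∑ j : Fin (m + 2), ((eAux p k (j : ℕ) (d j) : ℤ_[p])) * ω ^ (j : ℕ))
    with hFdef
  obtain ⟨f, g, hfg, hFfg⟩ := Fintype.exists_ne_map_eq_of_card_lt F (by
    rw [ZMod.card, Fintype.card_pi]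
    simp only [Fintype.card_fin]
    rw [hprod]
    exact hMN)
  -- the polynomial
  set a : Fin (m + 2) → ℤ := fun j => eAux p k (j : ℕ) (f j) - eAux p k (j : ℕ) (g j) with hadef
  set P : Polynomial ℤ := ∑ j : Fin (m + 2), Polynomial.C (a j) * Polynomial.X ^ (j : ℕ)
    with hPdef
  have hco : ∀ (j : ℕ) (h : j < m + 2), P.coeff j = a ⟨j, h⟩ := by
    intro j h
    rw [hPdef, Polynomial.finset_sum_coeff]
    rw [Finset.sum_eq_single (⟨j, h⟩ : Fin (m + 2))]
    · simp [Polynomial.coeff_C_mul, Polynomial.coeff_X_pow]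
    · intro b _ hb
      rw [Polynomial.coeff_C_mul, Polynomial.coeff_X_pow, if_neg, mul_zero]
      intro hjb
      exact hb (Fin.ext hjb.symm)
    · simp
  have hco0 : ∀ j : ℕ, m + 1 < j → P.coeff j = 0 := by
    intro j hj
    rw [hPdef, Polynomial.finset_sum_coeff]
    refine Finset.sum_eq_zero fun b _ => ?_
    rw [Polynomial.coeff_C_mul, Polynomial.coeff_X_pow, if_neg, mul_zero]
    have := b.isLt
    omega
  refine ⟨P, ?_, ?_, ?_, ?_, ?_⟩
  · -- P ≠ 0
    obtain ⟨j, hj⟩ : ∃ j, f j ≠ g j := by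
      by_contra h
      push_neg at h
      exact hfg (funext h)
    intro hP0
    apply hj
    have hcj : P.coeff (j : ℕ) = a ⟨(j : ℕ), j.isLt⟩ := hco _ j.isLt
    rw [hP0, Polynomial.coeff_zero] at hcj
    have haj : a j = 0 := by
      rw [show j = (⟨(j : ℕ), j.isLt⟩ : Fin (m + 2)) from (Fin.eta _ _).symm]
      exact hcj.symm
    rw [hadef] at haj
    simp only [sub_eq_zero] at haj
    exact Fin.ext (eAux_inj p k hp.pos haj)
  · -- natDegree
    exact Polynomial.natDegree_le_iff_coeff_eq_zero.mpr hco0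
  · -- norm bound
    have hval : Polynomial.aeval ω P
        = ∑ j : Fin (m + 2), ((a j : ℤ_[p])) * ω ^ (j : ℕ) := by
      rw [hPdef, map_sum]
      refine Finset.sum_congr rfl fun j _ => ?_
      rw [map_mul, map_pow, Polynomial.aeval_C, Polynomial.aeval_X]
      norm_num
    have hker : PadicInt.toZModPow M (Polynomial.aeval ω P) = 0 := by
      rw [hval]
      have hsplit : ∑ j : Fin (m + 2), ((a j : ℤ_[p])) * ω ^ (j : ℕ)
          = (∑ j : Fin (m + 2), ((eAux p k (j : ℕ) (f j) : ℤ_[p])) * ω ^ (j : ℕ))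
            - ∑ j : Fin (m + 2), ((eAux p k (j : ℕ) (g j) : ℤ_[p])) * ω ^ (j : ℕ) := by
        rw [← Finset.sum_sub_distrib]
        refine Finset.sum_congr rfl fun j _ => ?_
        rw [hadef]
        push_cast
        ring
      rw [hsplit, map_sub, sub_eq_zero]
      simp only [hFdef] at hFfg
      exact hFfg
    have hnorm : ‖Polynomial.aeval ω P‖ ≤ (p : ℝ) ^ (-(M : ℤ)) := by
      rw [PadicInt.norm_le_pow_iff_mem_span_pow, ← PadicInt.ker_toZModPow]
      exact RingHom.mem_ker.mpr hker
    refine lt_of_le_of_lt hnorm ?_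
    -- the arithmetic
    have hNreal : δ⁻¹ * Q * (δ⁻¹ * Q) * (Q / (p : ℝ)) ^ m < (N : ℝ) := by
      have hNc : (N : ℝ) = (A : ℝ) ^ 2 * (B : ℝ) ^ m := by push_cast [hNdef]; ring
      rw [hNc]
      have hpw : (0 : ℝ) < (Q / (p : ℝ)) ^ m := by positivity
      have hAA : δ⁻¹ * Q * (δ⁻¹ * Q) < (A : ℝ) * A := by nlinarith
      have h1 : δ⁻¹ * Q * (δ⁻¹ * Q) * (Q / (p : ℝ)) ^ m
          < (A : ℝ) * (A : ℝ) * (Q / (p : ℝ)) ^ m :=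
        mul_lt_mul_of_pos_right hAA hpw
      have h2 : (A : ℝ) * (A : ℝ) * (Q / (p : ℝ)) ^ m
          ≤ (A : ℝ) ^ 2 * (B : ℝ) ^ m := by
        rw [sq]
        have hA0 : (0 : ℝ) ≤ (A : ℝ) * A := by positivity
        exact mul_le_mul_of_nonneg_left (pow_le_pow_left₀ hBQ0.le hBQ m) hA0
      linarith
    have hN3 : (N : ℝ) ≤ (p : ℝ) ^ (M + 1) := by exact_mod_cast hNM
    have e1 : δ⁻¹ * Q * (δ⁻¹ * Q) * (Q / (p : ℝ)) ^ m
        = Q ^ (m + 2) / (δ ^ 2 * (p : ℝ) ^ m) := by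
      rw [div_pow]
      field_simp
      ring
    have h4 : Q ^ (m + 2) < δ ^ 2 * (p : ℝ) ^ m * (p : ℝ) ^ (M + 1) := by
      have := lt_of_lt_of_le hNreal hN3
      rw [e1, div_lt_iff₀ (by positivity)] at this
      nlinarith
    have h5 : Q ^ (m + 2) < δ ^ 2 * (p : ℝ) ^ (m + 2) * (p : ℝ) ^ M := by
      have hle : (p : ℝ) ^ m * (p : ℝ) ^ (M + 1) ≤ (p : ℝ) ^ (m + 2) * (p : ℝ) ^ M := by
        rw [← pow_add, ← pow_add]
        exact pow_le_pow_right₀ hpR.le (by omega)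
      nlinarith [sq_nonneg δ, hδ]
    have hzp : Q ^ (-((m : ℤ) + 1) - 1) = (Q ^ (m + 2) : ℝ)⁻¹ := by
      rw [show (-((m : ℤ) + 1) - 1) = -((m + 2 : ℕ) : ℤ) by push_cast; ring,
        zpow_neg, zpow_natCast]
    have hzp2 : (p : ℝ) ^ (-(M : ℤ)) = ((p : ℝ) ^ M)⁻¹ := by
      rw [zpow_neg, zpow_natCast]
    push_cast
    rw [hzp, hzp2]
    have hpM : (0 : ℝ) < (p : ℝ) ^ M := by positivity
    have hQn : (0 : ℝ) < Q ^ (m + 2) := by positivity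
    rw [show δ ^ 2 * (p : ℝ) ^ (m + 2) * (Q ^ (m + 2))⁻¹
        = (δ ^ 2 * (p : ℝ) ^ (m + 2)) / Q ^ (m + 2) by ring,
      inv_eq_one_div, div_lt_div_iff₀ hpM hQn, one_mul]
    nlinarith
  · -- archimedean coefficient bounds
    intro j hj
    have hj2 : j < m + 2 := by omega
    rw [hco j hj2, hadef]
    have hfj : ((f ⟨j, hj2⟩ : Fin _) : ℕ) < (if j < 2 then A else B) := (f ⟨j, hj2⟩).isLt
    have hgj : ((g ⟨j, hj2⟩ : Fin _) : ℕ) < (if j < 2 then A else B) := (g ⟨j, hj2⟩).isLt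
    by_cases hc2 : j < 2
    · rw [if_pos hc2] at hfj hgj
      simp only [eAux, if_pos hc2]
      have habs : |((f ⟨j, hj2⟩ : ℕ) : ℤ) - ((g ⟨j, hj2⟩ : ℕ) : ℤ)| ≤ (A : ℤ) - 1 := by
        rw [abs_le]
        constructor <;> omega
      refine le_trans (show _ ≤ (A : ℝ) - 1 by exact_mod_cast habs) (by linarith)
    · rw [if_neg hc2] at hfj hgj
      simp only [eAux, if_neg hc2]
      have habs : |(p : ℤ) ^ k * ((f ⟨j, hj2⟩ : ℕ) : ℤ) - (p : ℤ) ^ k * ((g ⟨j, hj2⟩ : ℕ) : ℤ)|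
          ≤ (p : ℤ) ^ k * ((B : ℤ) - 1) := by
        rw [← mul_sub, abs_mul, abs_of_nonneg (by positivity : (0:ℤ) ≤ (p : ℤ) ^ k)]
        have : |((f ⟨j, hj2⟩ : ℕ) : ℤ) - ((g ⟨j, hj2⟩ : ℕ) : ℤ)| ≤ (B : ℤ) - 1 := by
          rw [abs_le]
          constructor <;> omega
        exact mul_le_mul_of_nonneg_left this (by positivity)
      have hstep : (p : ℝ) ^ k * ((B : ℝ) - 1) ≤ δ⁻¹ * Q := by
        have h1 : (B : ℝ) - 1 ≤ δ⁻¹ * Q / (p : ℝ) ^ k := by linarith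
        have h2 : ((B : ℝ) - 1) * (p : ℝ) ^ k ≤ δ⁻¹ * Q := (le_div_iff₀ hpk0).mp h1
        linarith
      refine le_trans (show _ ≤ (p : ℝ) ^ k * ((B : ℝ) - 1) by exact_mod_cast habs) hstep
  · -- p-adic coefficient bounds
    intro j hj2 hjn
    have hj2' : j < m + 2 := by omega
    rw [hco j hj2', hadef]
    simp only [eAux, if_neg (by omega : ¬ j < 2)]
    have hrw : (((p : ℤ) ^ k * ((f ⟨j, hj2'⟩ : ℕ) : ℤ) - (p : ℤ) ^ k * ((g ⟨j, hj2'⟩ : ℕ) : ℤ)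
        : ℤ) : ℤ_[p])
        = (p : ℤ_[p]) ^ k * (((f ⟨j, hj2'⟩ : ℕ) : ℤ_[p]) - ((g ⟨j, hj2'⟩ : ℕ) : ℤ_[p])) := by
      push_cast
      ring
    rw [hrw, norm_mul]
    have h1 : ‖(p : ℤ_[p]) ^ k‖ = ((p : ℝ) ^ k)⁻¹ := by
      rw [PadicInt.norm_p_pow, zpow_neg, zpow_natCast]
    have h2 : ‖(((f ⟨j, hj2'⟩ : ℕ) : ℤ_[p]) - ((g ⟨j, hj2'⟩ : ℕ) : ℤ_[p]))‖ ≤ 1 :=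
      PadicInt.norm_le_one _
    calc ‖(p : ℤ_[p]) ^ k‖ * ‖(((f ⟨j, hj2'⟩ : ℕ) : ℤ_[p]) - ((g ⟨j, hj2'⟩ : ℕ) : ℤ_[p]))‖
        ≤ ((p : ℝ) ^ k)⁻¹ * 1 := by
          rw [h1]
          exact mul_le_mul_of_nonneg_left h2 (by positivity)
      _ ≤ δ := by rw [mul_one]; exact hpkδ
end

section
/- Let (Γ, N) be a regular system of points in a disc K₀ ⊂ ℚ_p and let Ψ̃ : ℝ₊ → ℝ₊ be monotonically decreasing with ∑_{h=1}^∞ Ψ̃(h) = ∞. Then the set of ω ∈ K₀ such that |ω − γ|_p < Ψ̃(N(γ)) for infinitely many γ ∈ Γ has full Haar measure in K₀. -/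
open MeasureTheory

variable (p : ℕ) [Fact p.Prime]

/-- A disc in `ℚ_[p]`. -/
def IsPadicDisc (K : Set ℚ_[p]) : Prop :=
  ∃ (a : ℚ_[p]) (r : ℝ), 0 < r ∧ K = {x | ‖x - a‖ < r}

/-- `(Γ, N)` is a regular system of points in `K₀` (w.r.t. the Haar measure `μ`):
there is `C > 0` such that for every disc `K ⊆ K₀` and all sufficiently large `T`
there are points `γ₁, …, γ_t ∈ Γ ∩ K` with `N(γᵢ) ≤ T`, pairwise distances at least
`T⁻¹`, and `t ≥ C·T·μ(K)`. -/
def IsRegularSystem [MeasurableSpace ℚ_[p]] (μ : Measure ℚ_[p]) (K₀ : Set ℚ_[p])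
    (Γ : Set ℚ_[p]) (N : ℚ_[p] → ℝ) : Prop :=
  ∃ C : ℝ, 0 < C ∧ ∀ K : Set ℚ_[p], K ⊆ K₀ → IsPadicDisc p K →
    ∃ T₀ : ℝ, ∀ T : ℝ, T₀ ≤ T →
      ∃ (t : ℕ) (γ : Fin t → ℚ_[p]),
        (∀ i, γ i ∈ Γ ∩ K) ∧ (∀ i, N (γ i) ≤ T) ∧
        (∀ i j, i ≠ j → T⁻¹ ≤ ‖γ i - γ j‖) ∧
        C * T * (μ K).toReal ≤ (t : ℝ)

section Aux

set_option linter.unusedSectionVars false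
set_option maxHeartbeats 1600000

open Metric
open scoped ENNReal NNReal

variable {p}

variable {p : ℕ} [Fact p.Prime]

lemma pR_pos : (0:ℝ) < p := by exact_mod_cast (Fact.out : p.Prime).pos
lemma pR_one_lt : (1:ℝ) < p := by exact_mod_cast (Fact.out : p.Prime).one_lt

/-- norms of nonzero p-adics are integer powers of p -/
lemma padic_norm_mem (x : ℚ_[p]) (hx : x ≠ 0) : ∃ m : ℤ, ‖x‖ = (p:ℝ) ^ m :=
  ⟨-x.valuation, Padic.norm_eq_zpow_neg_valuation hx⟩

lemma padic_dist_eq (x y : ℚ_[p]) : dist x y = ‖x - y‖ := rfl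

/-- In `ℚ_[p]`, an open ball equals a closed ball of slightly smaller power-of-p radius. -/
lemma padic_ball_eq (ρ : ℝ) (hρ : 0 < ρ) :
    ∃ m : ℤ, (p:ℝ) ^ m < ρ ∧ ρ ≤ (p:ℝ) ^ (m+1) ∧
      ∀ a : ℚ_[p], ball a ρ = closedBall a ((p:ℝ) ^ m) := by
  have h1 : (1:ℝ) < p := pR_one_lt
  obtain ⟨m, hm1, hm2⟩ : ∃ m : ℤ, (p:ℝ) ^ m < ρ ∧ ρ ≤ (p:ℝ) ^ (m+1) := by
    rcases lt_or_eq_of_le (Int.zpow_log_le_self (b := p) (Fact.out : p.Prime).one_lt hρ) with h | h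
    · exact ⟨Int.log p ρ, h, (Int.lt_zpow_succ_log_self (Fact.out : p.Prime).one_lt ρ).le⟩
    · refine ⟨Int.log p ρ - 1, ?_, by rw [sub_add_cancel]; exact h.ge⟩
      exact lt_of_lt_of_le (zpow_lt_zpow_right₀ h1 (by omega)) h.le
  refine ⟨m, hm1, hm2, fun a => ?_⟩
  ext x
  simp only [mem_ball, mem_closedBall, padic_dist_eq]
  constructor
  · intro hx
    rcases eq_or_ne (x - a) 0 with h | h
    · simp [h]; positivity
    · obtain ⟨k, hk⟩ := padic_norm_mem (x - a) h
      rw [hk] at hx ⊢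
      have : k < m + 1 := by
        by_contra hc
        exact absurd (lt_of_lt_of_le hx hm2) (not_lt.2 (zpow_le_zpow_right₀ h1.le (by omega)))
      exact zpow_le_zpow_right₀ h1.le (by omega)
  · intro hx; exact lt_of_le_of_lt hx hm1

/-- In `ℚ_[p]`, a closed ball of radius `p^m` is the open ball of radius `p^(m+1)`. -/
lemma padic_closedBall_eq_ball (m : ℤ) (a : ℚ_[p]) :
    closedBall a ((p:ℝ) ^ m) = ball a ((p:ℝ) ^ (m+1)) := by
  have h1 : (1:ℝ) < p := pR_one_lt
  ext x
  simp only [mem_ball, mem_closedBall, padic_dist_eq]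
  constructor
  · intro hx; exact lt_of_le_of_lt hx (zpow_lt_zpow_right₀ h1 (by omega))
  · intro hx
    rcases eq_or_ne (x - a) 0 with h | h
    · simp [h]; positivity
    · obtain ⟨k, hk⟩ := padic_norm_mem (x - a) h
      rw [hk] at hx ⊢
      have : k < m + 1 := by
        by_contra hc
        exact absurd hx (not_lt.2 (zpow_le_zpow_right₀ h1.le (by omega)))
      exact zpow_le_zpow_right₀ h1.le (by omega)

/-- a closed ball of radius `s > 0` equals the closed ball of radius `p ^ Int.log p s`. -/
lemma padic_closedBall_eq_zpow (s : ℝ) (hs : 0 < s) (a : ℚ_[p]) :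
    closedBall a s = closedBall a ((p:ℝ) ^ (Int.log p s)) := by
  have h1 : (1:ℝ) < p := pR_one_lt
  ext x
  simp only [mem_closedBall, padic_dist_eq]
  constructor
  · intro hx
    rcases eq_or_ne (x - a) 0 with h | h
    · simp [h]; positivity
    · obtain ⟨k, hk⟩ := padic_norm_mem (x - a) h
      rw [hk] at hx ⊢
      have : k ≤ Int.log p s := by
        by_contra hc
        have : (p:ℝ) ^ (Int.log p s + 1) ≤ (p:ℝ) ^ k := zpow_le_zpow_right₀ h1.le (by omega)
        exact absurd (lt_of_lt_of_le (Int.lt_zpow_succ_log_self (Fact.out : p.Prime).one_lt s) this)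
          (not_lt.2 hx)
      exact zpow_le_zpow_right₀ h1.le this
  · intro hx
    exact le_trans hx (Int.zpow_log_le_self (Fact.out : p.Prime).one_lt hs)

variable [MeasurableSpace ℚ_[p]] [BorelSpace ℚ_[p]]
  (μ : Measure ℚ_[p]) [μ.IsAddHaarMeasure]


lemma padic_meas_closedBall_translate (x : ℚ_[p]) (s : ℝ) :
    μ (closedBall x s) = μ (closedBall (0:ℚ_[p]) s) := by
  have : closedBall x s = (fun y => -x + y) ⁻¹' (closedBall (0:ℚ_[p]) s) := by
    ext y
    simp only [Set.mem_preimage, mem_closedBall, dist_eq_norm]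
    rw [sub_zero, neg_add_eq_sub]
  rw [this, measure_preimage_add]

lemma padic_meas_closedBall_ne_top (x : ℚ_[p]) (s : ℝ) : μ (closedBall x s) ≠ ⊤ :=
  (isCompact_closedBall x s).measure_lt_top.ne

lemma padic_meas_ball_ne_top (x : ℚ_[p]) (s : ℝ) : μ (ball x s) ≠ ⊤ :=
  ((measure_mono ball_subset_closedBall).trans_lt (isCompact_closedBall x s).measure_lt_top).ne

/-- The partition step: a closed ball of radius `p^(m+1)` is `p` disjoint translates of the
closed ball of radius `p^m`. -/
lemma padic_meas_closedBall_succ (m : ℤ) :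
    μ (closedBall (0:ℚ_[p]) ((p:ℝ) ^ (m+1))) = p * μ (closedBall (0:ℚ_[p]) ((p:ℝ) ^ m)) := by
  classical
  have hp1 : (1:ℝ) < p := by exact_mod_cast (Fact.out : p.Prime).one_lt
  set c : ℕ → ℚ_[p] := fun j => (j : ℚ_[p]) * (p : ℚ_[p]) ^ (-(m+1)) with hc
  have hnormc : ∀ j, ‖c j‖ ≤ (p:ℝ) ^ (m+1) := by
    intro j
    rw [hc]
    simp only [norm_mul, Padic.norm_p_zpow, neg_neg]
    calc ‖(j : ℚ_[p])‖ * (p:ℝ) ^ (m+1) ≤ 1 * (p:ℝ) ^ (m+1) := by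
          apply mul_le_mul_of_nonneg_right _ (by positivity)
          exact_mod_cast Padic.norm_int_le_one (p := p) j
      _ = (p:ℝ) ^ (m+1) := one_mul _
  have hcover : closedBall (0:ℚ_[p]) ((p:ℝ) ^ (m+1)) =
      ⋃ j ∈ Finset.range p, closedBall (c j) ((p:ℝ) ^ m) := by
    ext x
    simp only [Set.mem_iUnion, mem_closedBall, dist_eq_norm, sub_zero, Finset.mem_range,
      exists_prop]
    constructor
    · intro hx
      set u : ℚ_[p] := x * (p : ℚ_[p]) ^ (m+1) with hu
      have hun : ‖u‖ ≤ 1 := by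
        rw [hu, norm_mul, Padic.norm_p_zpow]
        calc ‖x‖ * (p:ℝ) ^ (-(m+1)) ≤ (p:ℝ)^(m+1) * (p:ℝ) ^ (-(m+1)) := by
              apply mul_le_mul_of_nonneg_right hx (by positivity)
          _ = 1 := by
              rw [← zpow_add₀ (by positivity : (p:ℝ) ≠ 0), add_neg_cancel, zpow_zero]
      set z : ℤ_[p] := ⟨u, hun⟩ with hz
      refine ⟨z.appr 1, by simpa using z.appr_lt 1, ?_⟩
      have hspec := PadicInt.appr_spec 1 z
      have hnorm : ‖z - (z.appr 1 : ℤ_[p])‖ ≤ (p:ℝ) ^ (-(1:ℤ)) := by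
        rw [show ((-1:ℤ)) = -(1:ℕ) by norm_num]
        exact (PadicInt.norm_le_pow_iff_mem_span_pow _ 1).2 (by simpa using hspec)
      have hnorm' : ‖u - (z.appr 1 : ℚ_[p])‖ ≤ (p:ℝ) ^ (-(1:ℤ)) := by
        have : ((z - (z.appr 1 : ℤ_[p]) : ℤ_[p]) : ℚ_[p]) = u - (z.appr 1 : ℚ_[p]) := by
          rw [PadicInt.coe_sub, PadicInt.coe_natCast]
        rw [← this]; exact hnorm
      have hx' : x = u * (p : ℚ_[p]) ^ (-(m+1)) := by
        rw [hu, mul_assoc, ← zpow_add₀ (by exact_mod_cast (Fact.out : p.Prime).ne_zero :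
          (p:ℚ_[p]) ≠ 0), add_neg_cancel, zpow_zero, mul_one]
      have : x - c (z.appr 1) = (u - (z.appr 1 : ℚ_[p])) * (p : ℚ_[p]) ^ (-(m+1)) := by
        rw [hx', hc]; push_cast; ring
      rw [this, norm_mul, Padic.norm_p_zpow, neg_neg]
      calc ‖u - (z.appr 1 : ℚ_[p])‖ * (p:ℝ)^(m+1) ≤ (p:ℝ)^(-(1:ℤ)) * (p:ℝ)^(m+1) := by
            apply mul_le_mul_of_nonneg_right hnorm' (by positivity)
        _ = (p:ℝ) ^ m := by
            rw [← zpow_add₀ (by positivity : (p:ℝ) ≠ 0)]; ring_nf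
    · rintro ⟨j, _, hj⟩
      calc ‖x‖ = ‖(x - c j) + c j‖ := by ring_nf
        _ ≤ max ‖x - c j‖ ‖c j‖ := IsUltrametricDist.norm_add_le_max _ _
        _ ≤ (p:ℝ) ^ (m+1) := max_le
            (hj.trans (zpow_le_zpow_right₀ hp1.le (by omega))) (hnormc j)
  have hdisj : (↑(Finset.range p) : Set ℕ).PairwiseDisjoint
      (fun j => closedBall (c j) ((p:ℝ) ^ m)) := by
    intro i hi j hj hij
    simp only [Finset.coe_range, Set.mem_Iio] at hi hj
    apply Set.disjoint_left.2
    intro x hxi hxj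
    simp only [mem_closedBall, dist_eq_norm] at hxi hxj
    have hsep : ‖c i - c j‖ = (p:ℝ) ^ (m+1) := by
      have : c i - c j = ((i:ℤ) - (j:ℤ) : ℤ) * (p : ℚ_[p]) ^ (-(m+1)) := by
        rw [hc]; push_cast; ring
      rw [this, norm_mul, Padic.norm_p_zpow, neg_neg]
      have h1 : ‖(((i:ℤ) - (j:ℤ) : ℤ) : ℚ_[p])‖ = 1 := by
        refine le_antisymm (Padic.norm_int_le_one _) ?_
        by_contra hlt
        push_neg at hlt
        have := (Padic.norm_intCast_lt_one_iff (k := (i:ℤ) - (j:ℤ))).1 hlt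
        rcases this with ⟨k, hk⟩
        have hij' : (i:ℤ) ≠ (j:ℤ) := by exact_mod_cast hij
        have : ((i:ℤ) - (j:ℤ)).natAbs < p := by omega
        have h2 : (p:ℤ) ∣ ((i:ℤ) - (j:ℤ)) := ⟨k, hk⟩
        have h4 : p ∣ ((i:ℤ) - (j:ℤ)).natAbs := Int.natAbs_dvd_natAbs.2 (by simpa using h2)
        have h6 := Nat.le_of_dvd (by omega) h4
        omega
      rw [h1, one_mul]
    have : ‖c i - c j‖ ≤ (p:ℝ) ^ m := by
      calc ‖c i - c j‖ = ‖(c i - x) + (x - c j)‖ := by ring_nf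
        _ ≤ max ‖c i - x‖ ‖x - c j‖ := IsUltrametricDist.norm_add_le_max _ _
        _ ≤ (p:ℝ) ^ m := by
            rw [show ‖c i - x‖ = ‖x - c i‖ by rw [← norm_neg]; ring_nf]
            exact max_le hxi hxj
    rw [hsep] at this
    exact absurd this (not_le.2 (zpow_lt_zpow_right₀ hp1 (by omega)))
  rw [hcover, measure_biUnion_finset hdisj (fun j _ => measurableSet_closedBall)]
  have : ∀ j ∈ Finset.range p, μ (closedBall (c j) ((p:ℝ)^m)) =
      μ (closedBall (0:ℚ_[p]) ((p:ℝ)^m)) := fun j _ => padic_meas_closedBall_translate μ _ _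
  rw [Finset.sum_congr rfl this, Finset.sum_const, Finset.card_range, nsmul_eq_mul]


lemma padic_meas_closedBall_zpow (m : ℤ) :
    (μ (closedBall (0:ℚ_[p]) ((p:ℝ)^m))).toReal
      = (p:ℝ)^m * (μ (closedBall (0:ℚ_[p]) ((p:ℝ)^(0:ℤ)))).toReal := by
  have hp0 : (0:ℝ) < p := by exact_mod_cast (Fact.out : p.Prime).pos
  have step : ∀ k : ℤ, (μ (closedBall (0:ℚ_[p]) ((p:ℝ)^(k+1)))).toReal
      = p * (μ (closedBall (0:ℚ_[p]) ((p:ℝ)^k))).toReal := by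
    intro k
    rw [padic_meas_closedBall_succ μ k, ENNReal.toReal_mul]
    norm_num
  induction m using Int.induction_on with
  | zero => rw [zpow_zero, one_mul]
  | succ n ih =>
      rw [step n, ih, zpow_add₀ (ne_of_gt hp0), zpow_one]; ring
  | pred n ih =>
      have hstep := step (-(n:ℤ) - 1)
      rw [sub_add_cancel, ih] at hstep
      have h2 : (μ (closedBall (0:ℚ_[p]) ((p:ℝ)^(-(n:ℤ)-1)))).toReal
          = (p:ℝ)^(-(n:ℤ)) * (μ (closedBall (0:ℚ_[p]) ((p:ℝ)^(0:ℤ)))).toReal / p := by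
        rw [eq_div_iff (ne_of_gt hp0), mul_comm _ (p:ℝ), ← hstep]
      rw [h2, zpow_sub₀ (ne_of_gt hp0), zpow_one]
      ring

lemma padicV_pos : 0 < (μ (closedBall (0:ℚ_[p]) ((p:ℝ)^(0:ℤ)))).toReal := by
  have h1 : μ (ball (0:ℚ_[p]) ((p:ℝ)^(0:ℤ))) ≠ 0 :=
    (isOpen_ball.measure_pos μ ⟨0, mem_ball_self (by norm_num)⟩).ne'
  apply ENNReal.toReal_pos
  · intro h
    exact h1 (le_antisymm (h ▸ measure_mono ball_subset_closedBall) (zero_le))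
  · exact padic_meas_closedBall_ne_top μ _ _

lemma padic_meas_ball_le (a : ℚ_[p]) (ρ : ℝ) (hρ : 0 < ρ) :
    (μ (ball a ρ)).toReal ≤ ρ * (μ (closedBall (0:ℚ_[p]) ((p:ℝ)^(0:ℤ)))).toReal := by
  obtain ⟨m, hm1, hm2, hball⟩ := padic_ball_eq (p := p) ρ hρ
  rw [hball a, padic_meas_closedBall_translate μ a ((p:ℝ)^m), padic_meas_closedBall_zpow μ m]
  exact mul_le_mul_of_nonneg_right hm1.le (ENNReal.toReal_nonneg)

lemma padic_meas_ball_ge (a : ℚ_[p]) (ρ : ℝ) (hρ : 0 < ρ) :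
    ρ / p * (μ (closedBall (0:ℚ_[p]) ((p:ℝ)^(0:ℤ)))).toReal ≤ (μ (ball a ρ)).toReal := by
  have hp0 : (0:ℝ) < p := by exact_mod_cast (Fact.out : p.Prime).pos
  obtain ⟨m, hm1, hm2, hball⟩ := padic_ball_eq (p := p) ρ hρ
  rw [hball a, padic_meas_closedBall_translate μ a ((p:ℝ)^m), padic_meas_closedBall_zpow μ m]
  have : ρ / p ≤ (p:ℝ)^m := by
    rw [div_le_iff₀ hp0]
    calc ρ ≤ (p:ℝ)^(m+1) := hm2
      _ = (p:ℝ)^m * p := by rw [zpow_add₀ (ne_of_gt hp0), zpow_one]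
  exact mul_le_mul_of_nonneg_right this (ENNReal.toReal_nonneg)

lemma padic_disjoint_union_balls {ι : Type*} (s : Finset ι) (γ : ι → ℚ_[p]) (δ ρ : ℝ)
    (hρδ : ρ ≤ δ) (hsep : ∀ i ∈ s, ∀ j ∈ s, i ≠ j → δ ≤ ‖γ i - γ j‖) :
    μ (⋃ i ∈ s, ball (γ i) ρ) = ∑ i ∈ s, μ (ball (γ i) ρ) := by
  apply measure_biUnion_finset _ (fun i _ => measurableSet_ball)
  intro i hi j hj hij
  apply Set.disjoint_left.2
  intro x hxi hxj
  simp only [mem_ball, padic_dist_eq] at hxi hxj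
  have : ‖γ i - γ j‖ < δ := by
    calc ‖γ i - γ j‖ = ‖(γ i - x) + (x - γ j)‖ := by ring_nf
      _ ≤ max ‖γ i - x‖ ‖x - γ j‖ := IsUltrametricDist.norm_add_le_max _ _
      _ < δ := by
          apply max_lt _ (lt_of_lt_of_le hxj hρδ)
          rw [show ‖γ i - x‖ = ‖x - γ i‖ by rw [← norm_neg]; ring_nf]
          exact lt_of_lt_of_le hxi hρδ
  exact absurd this (not_lt.2 (hsep i hi j hj hij))

include μ in
lemma padic_packing {ι : Type*} (s : Finset ι) (γ : ι → ℚ_[p]) (a : ℚ_[p]) (R δ : ℝ)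
    (hδ : 0 < δ) (hR : 0 < R) (hmem : ∀ i ∈ s, γ i ∈ ball a R)
    (hsep : ∀ i ∈ s, ∀ j ∈ s, i ≠ j → δ ≤ ‖γ i - γ j‖) :
    (s.card : ℝ) ≤ p * max R δ / δ := by
  have hp0 : (0:ℝ) < p := by exact_mod_cast (Fact.out : p.Prime).pos
  set V := (μ (closedBall (0:ℚ_[p]) ((p:ℝ)^(0:ℤ)))).toReal with hV
  have hVpos : 0 < V := padicV_pos μ
  have hsub : (⋃ i ∈ s, ball (γ i) δ) ⊆ ball a (max R δ) := by
    intro x hx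
    simp only [Set.mem_iUnion, exists_prop] at hx
    obtain ⟨i, hi, hxi⟩ := hx
    simp only [mem_ball, padic_dist_eq] at hxi ⊢
    calc ‖x - a‖ = ‖(x - γ i) + (γ i - a)‖ := by ring_nf
      _ ≤ max ‖x - γ i‖ ‖γ i - a‖ := IsUltrametricDist.norm_add_le_max _ _
      _ < max R δ := by
          apply max_lt (lt_of_lt_of_le hxi (le_max_right _ _))
          have := hmem i hi
          simp only [mem_ball, padic_dist_eq] at this
          exact lt_of_lt_of_le this (le_max_left _ _)
  have hmeas := padic_disjoint_union_balls μ s γ δ δ le_rfl hsep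
  have h1 : (s.card : ℝ) * (δ / p * V) ≤ (μ (⋃ i ∈ s, ball (γ i) δ)).toReal := by
    rw [hmeas, ENNReal.toReal_sum (fun i _ => padic_meas_ball_ne_top μ _ _)]
    calc (s.card : ℝ) * (δ / p * V) = ∑ _i ∈ s, (δ / p * V) := by
          rw [Finset.sum_const, nsmul_eq_mul]
      _ ≤ ∑ i ∈ s, (μ (ball (γ i) δ)).toReal :=
          Finset.sum_le_sum (fun i _ => padic_meas_ball_ge μ _ δ hδ)
  have h2 : (μ (⋃ i ∈ s, ball (γ i) δ)).toReal ≤ max R δ * V := by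
    calc (μ (⋃ i ∈ s, ball (γ i) δ)).toReal ≤ (μ (ball a (max R δ))).toReal := by
          apply ENNReal.toReal_mono (padic_meas_ball_ne_top μ _ _) (measure_mono hsub)
      _ ≤ max R δ * V := padic_meas_ball_le μ a _ (lt_of_lt_of_le hR (le_max_left _ _))
  have h3 : (s.card : ℝ) * (δ / p * V) ≤ max R δ * V := le_trans h1 h2
  have h4 : (s.card:ℝ) * (δ / p * V) * (p / V) = s.card * δ := by field_simp
  have h5 : (R ⊔ δ) * V * (p / V) = p * (R ⊔ δ) := by field_simp
  rw [le_div_iff₀ hδ]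
  calc (s.card:ℝ) * δ = (s.card:ℝ) * (δ / p * V) * (p / V) := h4.symm
    _ ≤ (R ⊔ δ) * V * (p/V) := mul_le_mul_of_nonneg_right h3 (by positivity)
    _ = p * (R ⊔ δ) := h5


include μ in
lemma chung_erdos (s : Finset ℕ) (A : ℕ → Set ℚ_[p]) (hA : ∀ k, MeasurableSet (A k)) :
    (∑ k ∈ s, μ (A k))^2 ≤ μ (⋃ k ∈ s, A k) * ∑ k ∈ s, ∑ l ∈ s, μ (A k ∩ A l) := by
  classical
  set f : ℚ_[p] → ℝ≥0∞ := fun x => ∑ k ∈ s, (A k).indicator (fun _ => (1:ℝ≥0∞)) x with hf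
  set U := ⋃ k ∈ s, A k with hU
  have hUm : MeasurableSet U := MeasurableSet.biUnion s.countable_toSet (fun k _ => hA k)
  set g : ℚ_[p] → ℝ≥0∞ := U.indicator (fun _ => (1:ℝ≥0∞)) with hg
  have hfm : Measurable f := Finset.measurable_sum s
    (fun k _ => (measurable_const.indicator (hA k)))
  have hgm : Measurable g := measurable_const.indicator hUm
  have hfg : ∀ x, f x = f x * g x := by
    intro x
    by_cases hx : x ∈ U
    · rw [hg]; simp [Set.indicator_of_mem hx]
    · have : f x = 0 := by
        rw [hf]
        apply Finset.sum_eq_zero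
        intro k hk
        apply Set.indicator_of_notMem
        intro hxk
        exact hx (Set.mem_biUnion hk hxk)
      rw [this, zero_mul]
  have hint_f : ∫⁻ x, f x ∂μ = ∑ k ∈ s, μ (A k) := by
    rw [hf, lintegral_finset_sum _ (fun k _ => measurable_const.indicator (hA k))]
    exact Finset.sum_congr rfl fun k _ => lintegral_indicator_one (hA k)
  have hint_f2 : ∫⁻ x, (f x)^2 ∂μ = ∑ k ∈ s, ∑ l ∈ s, μ (A k ∩ A l) := by
    have : ∀ x, (f x)^2 = ∑ k ∈ s, ∑ l ∈ s,
        (A k ∩ A l).indicator (fun _ => (1:ℝ≥0∞)) x := by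
      intro x
      rw [hf, sq, Finset.sum_mul_sum]
      congr 1
      ext k
      congr 1
      ext l
      rw [← Set.inter_indicator_mul]
      simp
    calc ∫⁻ x, (f x)^2 ∂μ
        = ∫⁻ x, ∑ k ∈ s, ∑ l ∈ s, (A k ∩ A l).indicator (fun _ => (1:ℝ≥0∞)) x ∂μ := by
          congr 1; ext x; exact this x
      _ = ∑ k ∈ s, ∑ l ∈ s, μ (A k ∩ A l) := by
          rw [lintegral_finset_sum _ (fun k _ => Finset.measurable_sum s
            (fun l _ => measurable_const.indicator ((hA k).inter (hA l))))]
          refine Finset.sum_congr rfl fun k _ => ?_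
          rw [lintegral_finset_sum _ (fun l _ => measurable_const.indicator ((hA k).inter (hA l)))]
          exact Finset.sum_congr rfl fun l _ => lintegral_indicator_one ((hA k).inter (hA l))
  have hint_g2 : ∫⁻ x, (g x)^2 ∂μ = μ U := by
    have : ∀ x, (g x)^2 = g x := by
      intro x
      rw [hg]
      by_cases hx : x ∈ U <;> simp [Set.indicator_of_mem, Set.indicator_of_notMem, hx]
    calc ∫⁻ x, (g x)^2 ∂μ = ∫⁻ x, g x ∂μ := by congr 1; ext x; exact this x
      _ = μ U := lintegral_indicator_one hUm
  have hconj : (2:ℝ).HolderConjugate 2 := by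
    constructor <;> norm_num
  have hold := ENNReal.lintegral_mul_le_Lp_mul_Lq μ hconj hfm.aemeasurable hgm.aemeasurable
  have hmain : ∫⁻ x, f x ∂μ ≤ (∫⁻ x, (f x)^2 ∂μ)^((1:ℝ)/2) * (∫⁻ x, (g x)^2 ∂μ)^((1:ℝ)/2) := by
    calc ∫⁻ x, f x ∂μ = ∫⁻ x, (f * g) x ∂μ := by
          congr 1; ext x; exact hfg x
      _ ≤ (∫⁻ x, f x ^ (2:ℝ) ∂μ)^((1:ℝ)/2) * (∫⁻ x, g x ^ (2:ℝ) ∂μ)^((1:ℝ)/2) := hold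
      _ = (∫⁻ x, (f x)^2 ∂μ)^((1:ℝ)/2) * (∫⁻ x, (g x)^2 ∂μ)^((1:ℝ)/2) := by
          congr 2
          · congr 1; ext x; rw [← ENNReal.rpow_natCast (f x) 2]; norm_num
          · congr 1; ext x; rw [← ENNReal.rpow_natCast (g x) 2]; norm_num
  have hsq := pow_le_pow_left' hmain 2
  rw [hint_f] at hsq
  refine le_trans hsq (le_of_eq ?_)
  rw [mul_pow]
  have hhalf : ∀ y : ℝ≥0∞, (y^((1:ℝ)/2))^2 = y := by
    intro y
    rw [← ENNReal.rpow_natCast (y^((1:ℝ)/2)) 2, ← ENNReal.rpow_mul]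
    norm_num
  rw [hhalf, hhalf, hint_f2, hint_g2, mul_comm]

lemma not_summable_min_one {b : ℕ → ℝ} (h : ¬ Summable b) :
    ¬ Summable (fun n => min (b n) 1) := by
  intro hs
  apply h
  have h0 := hs.tendsto_atTop_zero
  have hev : ∀ᶠ n in Filter.atTop, min (b n) 1 = b n := by
    filter_upwards [h0.eventually_lt_const (zero_lt_one)] with n hn
    rcases le_or_gt (b n) 1 with h' | h'
    · exact min_eq_left h'
    · exact absurd hn (by rw [min_eq_right h'.le]; norm_num)
  obtain ⟨N, hN⟩ := Filter.eventually_atTop.1 hev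
  have h1 : Summable (fun n => min (b (n + N)) 1) := (summable_nat_add_iff N).2 hs
  have h2 : Summable (fun n => b (n + N)) := by
    apply h1.congr
    intro n
    exact hN (n + N) (Nat.le_add_left _ _)
  exact (summable_nat_add_iff N).1 h2

lemma divergence_dyadic {Ψ : ℝ → ℝ} (hΨpos : ∀ x : ℝ, 0 < x → 0 < Ψ x)
    (hΨmono : ∀ x y : ℝ, 0 < x → x ≤ y → Ψ y ≤ Ψ x)
    (hdiv : ¬ Summable (fun h : ℕ => Ψ (h + 1)))
    (T₁ : ℝ) (hT₁ : 1 ≤ T₁) :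
    ¬ Summable (fun n : ℕ => min (T₁ * 2^n * Ψ (T₁ * 2^n)) 1) := by
  obtain ⟨s, hs⟩ : ∃ s : ℕ, T₁ ≤ (2:ℝ)^s := by
    obtain ⟨n, hn⟩ := pow_unbounded_of_one_lt T₁ one_lt_two
    exact ⟨n, hn.le⟩
  have hcond : ¬ Summable (fun k : ℕ => (2:ℝ)^k * Ψ ((2^k : ℕ) + 1)) := by
    intro hsum
    apply hdiv
    have hf : ∀ n : ℕ, 0 ≤ Ψ ((n:ℝ) + 1) := fun n => (hΨpos _ (by positivity)).le
    have hmono : ∀ ⦃m n : ℕ⦄, 0 < m → m ≤ n → Ψ ((n:ℝ)+1) ≤ Ψ ((m:ℝ)+1) := by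
      intro m n _ hmn
      refine hΨmono _ _ (by positivity) ?_
      have : (m:ℝ) ≤ (n:ℝ) := Nat.cast_le.mpr hmn
      linarith
    exact (summable_condensed_iff_of_nonneg hf hmono).1 (by
      apply hsum.congr
      intro k
      push_cast
      ring_nf)
  have hshift : ¬ Summable (fun k : ℕ => min ((2:ℝ)^(k+s) * Ψ ((2^(k+s) : ℕ) + 1)) 1) := by
    intro hsum
    have := not_summable_min_one ((summable_nat_add_iff s).not.2 hcond)
    exact this (by
      apply hsum.congr
      intro k
      rfl)
  intro hsum
  apply hshift
  have hmul : Summable (fun k : ℕ => (2:ℝ)^s * min (T₁ * 2^k * Ψ (T₁ * 2^k)) 1) :=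
    hsum.mul_left _
  apply Summable.of_nonneg_of_le _ _ hmul
  · intro k
    apply le_min _ zero_le_one
    apply mul_nonneg (by positivity)
    exact (hΨpos _ (by positivity)).le
  · intro k
    set c := T₁ * 2^k * Ψ (T₁ * 2^k) with hcdef
    have hxpos : (0:ℝ) < T₁ * 2^k := by positivity
    have hψ' : (0:ℝ) ≤ Ψ (((2^(k+s):ℕ):ℝ) + 1) := (hΨpos _ (by positivity)).le
    have hcb : (2:ℝ)^(k+s) * Ψ (((2^(k+s):ℕ):ℝ) + 1) ≤ 2^s * c := by
      have hx2 : T₁ * 2^k ≤ ((2^(k+s):ℕ):ℝ) + 1 := by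
        push_cast
        have : T₁ * 2^k ≤ (2:ℝ)^s * 2^k := mul_le_mul_of_nonneg_right hs (by positivity)
        rw [pow_add]
        nlinarith [pow_pos (zero_lt_two (α := ℝ)) k, pow_pos (zero_lt_two (α := ℝ)) s]
      have hψle : Ψ (((2^(k+s):ℕ):ℝ) + 1) ≤ Ψ (T₁ * 2^k) := hΨmono _ _ hxpos hx2
      have h2k : (2:ℝ)^k ≤ T₁ * 2^k := le_mul_of_one_le_left (by positivity) hT₁
      have hΨx : (0:ℝ) < Ψ (T₁ * 2^k) := hΨpos _ hxpos
      have s1 : (2:ℝ)^k * Ψ (((2^(k+s):ℕ):ℝ) + 1) ≤ (T₁ * 2^k) * Ψ (T₁*2^k) := by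
        calc (2:ℝ)^k * Ψ (((2^(k+s):ℕ):ℝ) + 1) ≤ (2:ℝ)^k * Ψ (T₁*2^k) :=
              mul_le_mul_of_nonneg_left hψle (by positivity)
          _ ≤ (T₁ * 2^k) * Ψ (T₁*2^k) := mul_le_mul_of_nonneg_right h2k hΨx.le
      rw [hcdef, pow_add]
      calc (2:ℝ)^k * 2^s * Ψ (((2^(k+s):ℕ):ℝ) + 1)
          = 2^s * ((2:ℝ)^k * Ψ (((2^(k+s):ℕ):ℝ) + 1)) := by ring
        _ ≤ 2^s * ((T₁ * 2^k) * Ψ (T₁*2^k)) := mul_le_mul_of_nonneg_left s1 (by positivity)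
        _ = 2^s * (T₁ * 2^k * Ψ (T₁*2^k)) := by ring
    rcases lt_or_ge c 1 with hc | hc
    · calc min ((2:ℝ)^(k+s) * Ψ (((2^(k+s):ℕ):ℝ) + 1)) 1
          ≤ (2:ℝ)^(k+s) * Ψ (((2^(k+s):ℕ):ℝ) + 1) := min_le_left _ _
        _ ≤ 2^s * c := hcb
        _ = 2^s * min c 1 := by rw [min_eq_left hc.le]
    · calc min ((2:ℝ)^(k+s) * Ψ (((2^(k+s):ℕ):ℝ) + 1)) 1 ≤ 1 := min_le_right _ _
        _ ≤ 2^s * min c 1 := by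
            rw [min_eq_right hc]
            exact le_mul_of_one_le_left zero_le_one (one_le_pow₀ one_le_two)

lemma padic_singleton_null (x : ℚ_[p]) : μ {x} = 0 := by
  set V := (μ (closedBall (0:ℚ_[p]) ((p:ℝ)^(0:ℤ)))).toReal with hV
  have hVpos : 0 < V := padicV_pos μ
  by_contra h
  have hfin : μ {x} ≠ ⊤ := by
    refine ne_of_lt (lt_of_le_of_lt (measure_mono ?_) (lt_top_iff_ne_top.2
      (padic_meas_ball_ne_top μ x 1)))
    exact Set.singleton_subset_iff.2 (mem_ball_self one_pos)
  have hpos : 0 < (μ {x}).toReal := ENNReal.toReal_pos h hfin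
  set ε := (μ {x}).toReal / 2 / V with hε
  have hεpos : 0 < ε := by positivity
  have h1 : μ {x} ≤ μ (ball x ε) :=
    measure_mono (Set.singleton_subset_iff.2 (mem_ball_self hεpos))
  have h2 : (μ {x}).toReal ≤ ε * V :=
    le_trans (ENNReal.toReal_mono (padic_meas_ball_ne_top μ x ε) h1)
      (padic_meas_ball_le μ x ε hεpos)
  rw [hε] at h2
  have : (μ {x}).toReal / 2 / V * V = (μ {x}).toReal / 2 := by field_simp
  rw [this] at h2
  linarith

theorem key_disc (K₀ : Set ℚ_[p]) (Γ : Set ℚ_[p]) (hΓ : Γ.Countable) (N : ℚ_[p] → ℝ)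
    (hN : ∀ γ ∈ Γ, 0 < N γ)
    (hreg : IsRegularSystem p μ K₀ Γ N)
    (Ψ : ℝ → ℝ) (hΨpos : ∀ x : ℝ, 0 < x → 0 < Ψ x)
    (hΨmono : ∀ x y : ℝ, 0 < x → x ≤ y → Ψ y ≤ Ψ x)
    (hdiv : ¬ Summable (fun h : ℕ => Ψ (h + 1))) :
    ∃ c : ℝ, 0 < c ∧ ∀ I : Set ℚ_[p], I ⊆ K₀ → IsPadicDisc p I →
      ENNReal.ofReal (c * (μ I).toReal)
        ≤ μ ({ω | {γ ∈ Γ | ‖ω - γ‖ < Ψ (N γ)}.Infinite} ∩ I) := by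
  classical
  obtain ⟨C, hC, hregK⟩ := hreg
  have hp0 : (0:ℝ) < p := by exact_mod_cast (Fact.out : p.Prime).pos
  have hp1 : (1:ℝ) ≤ p := by exact_mod_cast (Fact.out : p.Prime).one_lt.le
  set V : ℝ := (μ (closedBall (0:ℚ_[p]) ((p:ℝ)^(0:ℤ)))).toReal with hV
  have hVpos : 0 < V := padicV_pos μ
  set c₁ : ℝ := C * V / p with hc₁
  have hc₁pos : 0 < c₁ := by positivity
  refine ⟨c₁ * c₁ / (5 * p^3), by positivity, ?_⟩
  rintro I hIK ⟨a, r, hr, rfl⟩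
  set I : Set ℚ_[p] := {x | ‖x - a‖ < r} with hIdef
  have hI : I = ball a r := by
    ext x; simp only [hIdef, Set.mem_setOf_eq, mem_ball, padic_dist_eq]
  -- basic measure facts about I
  have hμIlt : μ I ≠ ⊤ := by rw [hI]; exact padic_meas_ball_ne_top μ a r
  set μIr : ℝ := (μ I).toReal with hμIr
  have hμIpos : 0 < μIr := by
    apply ENNReal.toReal_pos _ hμIlt
    rw [hI]
    exact (isOpen_ball.measure_pos μ ⟨a, mem_ball_self hr⟩).ne'
  have hrle : r * V ≤ p * μIr := by
    have h := padic_meas_ball_ge μ a r hr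
    rw [← hI] at h
    have h2 := mul_le_mul_of_nonneg_right h hp0.le
    calc r * V = r / p * V * p := by field_simp
      _ ≤ μIr * p := h2
      _ = p * μIr := mul_comm _ _
  -- the scales
  obtain ⟨T₀, hT₀⟩ := hregK I hIK ⟨a, r, hr, rfl⟩
  set T₁ : ℝ := max (max T₀ 2) r⁻¹ with hT₁def
  have hT₁1 : 1 ≤ T₁ := le_trans (by norm_num) (le_trans (le_max_right T₀ 2) (le_max_left _ _))
  set T : ℕ → ℝ := fun n => T₁ * 2^n with hTdef
  have hT1le : ∀ n, T₁ ≤ T n := fun n =>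
    le_mul_of_one_le_right (le_trans zero_le_one hT₁1) (one_le_pow₀ one_le_two)
  have hTpos : ∀ n, 0 < T n := fun n => lt_of_lt_of_le (by linarith) (hT1le n)
  have hT₀le : ∀ n, T₀ ≤ T n := fun n =>
    le_trans (le_trans (le_max_left T₀ 2) (le_max_left _ _)) (hT1le n)
  have hTinv_r : ∀ n, (T n)⁻¹ ≤ r := by
    intro n
    rw [inv_le_comm₀ (hTpos n) hr]
    exact le_trans (le_max_right _ _) (hT1le n)
  have hTmono : ∀ k l, k ≤ l → T k ≤ T l := by
    intro k l hkl
    exact mul_le_mul_of_nonneg_left (pow_le_pow_right₀ one_le_two hkl) (by linarith)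
  have hTsum : ∀ (l : ℕ) (F : Finset ℕ),
      ∑ k ∈ F.filter (· ≤ l), T k ≤ 2 * T l := by
    intro l F
    calc ∑ k ∈ F.filter (· ≤ l), T k ≤ ∑ k ∈ Finset.range (l+1), T k := by
          apply Finset.sum_le_sum_of_subset_of_nonneg
          · intro k hk
            simp only [Finset.mem_filter] at hk
            exact Finset.mem_range.2 (by omega)
          · intro k _ _; exact (hTpos k).le
      _ = T₁ * ∑ k ∈ Finset.range (l+1), 2^k := by rw [Finset.mul_sum]
      _ = T₁ * (2^(l+1) - 1) := by rw [geom_sum_eq (by norm_num : (2:ℝ) ≠ 1)]; norm_num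
      _ ≤ T₁ * 2^(l+1) := by nlinarith
      _ = 2 * T l := by rw [hTdef]; ring
  -- the radii
  set ρ : ℕ → ℝ := fun n => min (Ψ (T n)) (T n)⁻¹ with hρdef
  have hρpos : ∀ n, 0 < ρ n := fun n => lt_min (hΨpos _ (hTpos n)) (inv_pos.2 (hTpos n))
  have hρinv : ∀ n, ρ n ≤ (T n)⁻¹ := fun n => min_le_right _ _
  have hρr : ∀ n, ρ n ≤ r := fun n => le_trans (hρinv n) (hTinv_r n)
  have hρanti : ∀ k l, k ≤ l → ρ l ≤ ρ k := by
    intro k l hkl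
    apply le_min
    · exact le_trans (min_le_left _ _) (hΨmono _ _ (hTpos k) (hTmono k l hkl))
    · exact le_trans (min_le_right _ _) (inv_anti₀ (hTpos k) (hTmono k l hkl))
  set a' : ℕ → ℝ := fun n => T n * ρ n with ha'def
  have ha'pos : ∀ n, 0 < a' n := fun n => mul_pos (hTpos n) (hρpos n)
  have ha'le1 : ∀ n, a' n ≤ 1 := by
    intro n
    rw [ha'def]
    calc T n * ρ n ≤ T n * (T n)⁻¹ := mul_le_mul_of_nonneg_left (hρinv n) (hTpos n).le
      _ = 1 := mul_inv_cancel₀ (hTpos n).ne'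
  have ha'div : ¬ Summable a' := by
    have h1 := divergence_dyadic hΨpos hΨmono hdiv T₁ hT₁1
    intro hs
    apply h1
    apply hs.congr
    intro n
    show T n * min (Ψ (T n)) (T n)⁻¹ = min (T₁ * 2 ^ n * Ψ (T₁ * 2 ^ n)) 1
    rw [show T₁ * 2 ^ n = T n from rfl]
    rcases le_or_gt (Ψ (T n)) (T n)⁻¹ with h | h
    · rw [min_eq_left h, min_eq_left]
      nlinarith [mul_le_mul_of_nonneg_left h (hTpos n).le, mul_inv_cancel₀ (hTpos n).ne']
    · rw [min_eq_right h.le, min_eq_right, mul_inv_cancel₀ (hTpos n).ne']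
      nlinarith [mul_le_mul_of_nonneg_left h.le (hTpos n).le, mul_inv_cancel₀ (hTpos n).ne']
  -- select the points
  have hsel : ∀ n : ℕ, ∃ (t : ℕ) (γ : Fin t → ℚ_[p]),
      (∀ i, γ i ∈ Γ ∩ I) ∧ (∀ i, N (γ i) ≤ T n) ∧
      (∀ i j, i ≠ j → (T n)⁻¹ ≤ ‖γ i - γ j‖) ∧
      C * T n * (μ I).toReal ≤ (t : ℝ) := fun n => hT₀ (T n) (hT₀le n)
  choose t γpt hmem hNle hsep hcount using hsel
  -- the sets
  set A : ℕ → Set ℚ_[p] := fun n => ⋃ i : Fin (t n), ball (γpt n i) (ρ n) with hAdef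
  have hAmeas : ∀ n, MeasurableSet (A n) :=
    fun n => MeasurableSet.iUnion (fun i => measurableSet_ball)
  have hAI : ∀ n, A n ⊆ I := by
    intro n x hx
    simp only [hAdef, Set.mem_iUnion] at hx
    obtain ⟨i, hi⟩ := hx
    have hγI : γpt n i ∈ ball a r := by rw [← hI]; exact (hmem n i).2
    rw [hI]
    simp only [mem_ball, padic_dist_eq] at hi hγI ⊢
    calc ‖x - a‖ = ‖(x - γpt n i) + (γpt n i - a)‖ := by ring_nf
      _ ≤ max ‖x - γpt n i‖ ‖γpt n i - a‖ := IsUltrametricDist.norm_add_le_max _ _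
      _ < r := max_lt (lt_of_lt_of_le hi (hρr n)) hγI
  have hAne_top : ∀ n, μ (A n) ≠ ⊤ :=
    fun n => (lt_of_le_of_lt (measure_mono (hAI n)) (lt_top_iff_ne_top.2 hμIlt)).ne
  -- lower bound for μ (A n)
  have hAlow : ∀ n, c₁ * a' n * μIr ≤ (μ (A n)).toReal := by
    intro n
    have hdisj := padic_disjoint_union_balls μ (Finset.univ : Finset (Fin (t n))) (γpt n)
      ((T n)⁻¹) (ρ n) (hρinv n) (fun i _ j _ hij => hsep n i j hij)
    have hAeq : A n = ⋃ i ∈ (Finset.univ : Finset (Fin (t n))), ball (γpt n i) (ρ n) := by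
      simp [hAdef]
    rw [hAeq, hdisj, ENNReal.toReal_sum (fun i _ => padic_meas_ball_ne_top μ _ _)]
    have hstart : c₁ * a' n * μIr = (C * T n * μIr) * (ρ n / p * V) := by
      show C * V / p * (T n * ρ n) * μIr = (C * T n * μIr) * (ρ n / p * V)
      field_simp
    rw [hstart]
    calc (C * T n * μIr) * (ρ n / p * V) ≤ (t n : ℝ) * (ρ n / p * V) :=
          mul_le_mul_of_nonneg_right (hcount n)
            (by have := hρpos n; positivity)
      _ = ∑ _i ∈ (Finset.univ : Finset (Fin (t n))), (ρ n / p * V) := by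
          rw [Finset.sum_const, Finset.card_univ, Fintype.card_fin, nsmul_eq_mul]
      _ ≤ ∑ i ∈ (Finset.univ : Finset (Fin (t n))), (μ (ball (γpt n i) (ρ n))).toReal :=
          Finset.sum_le_sum (fun i _ => padic_meas_ball_ge μ _ _ (hρpos n))
  -- upper bound for pairs
  have htk : ∀ k, (t k : ℝ) ≤ p * r * T k := by
    intro k
    have hpack := padic_packing μ (Finset.univ : Finset (Fin (t k))) (γpt k) a r ((T k)⁻¹)
      (inv_pos.2 (hTpos k)) hr
      (fun i _ => by rw [← hI]; exact (hmem k i).2)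
      (fun i _ j _ hij => hsep k i j hij)
    rw [Finset.card_univ, Fintype.card_fin] at hpack
    calc (t k : ℝ) ≤ p * max r (T k)⁻¹ / (T k)⁻¹ := hpack
      _ = p * r / (T k)⁻¹ := by rw [max_eq_left (hTinv_r k)]
      _ = p * r * T k := by rw [div_eq_mul_inv, inv_inv]
  have hApair : ∀ k l, k ≤ l →
      (μ (A k ∩ A l)).toReal ≤ p^3 * μIr * (a' k * a' l + T k * ρ l) := by
    intro k l hkl
    set S : Fin (t k) → Finset (Fin (t l)) :=
      fun i => Finset.univ.filter (fun j => ‖γpt l j - γpt k i‖ < ρ k) with hS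
    have hcard : ∀ i, ((S i).card : ℝ) ≤ p * (ρ k * T l + 1) := by
      intro i
      have hpack := padic_packing μ (S i) (γpt l) (γpt k i) (ρ k) ((T l)⁻¹)
        (inv_pos.2 (hTpos l)) (hρpos k)
        (fun j hj => by
          simp only [hS, Finset.mem_filter] at hj
          simp only [mem_ball, padic_dist_eq]
          exact hj.2)
        (fun i' _ j' _ hij => hsep l i' j' hij)
      have hTlinv : (0:ℝ) < (T l)⁻¹ := inv_pos.2 (hTpos l)
      calc ((S i).card : ℝ) ≤ p * max (ρ k) (T l)⁻¹ / (T l)⁻¹ := hpack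
        _ = p * (max (ρ k) (T l)⁻¹ * T l) := by rw [div_eq_mul_inv, inv_inv]; ring
        _ ≤ p * ((ρ k + (T l)⁻¹) * T l) := by
            apply mul_le_mul_of_nonneg_left _ hp0.le
            apply mul_le_mul_of_nonneg_right _ (hTpos l).le
            exact max_le (le_add_of_nonneg_right hTlinv.le) (le_add_of_nonneg_left (hρpos k).le)
        _ = p * (ρ k * T l + 1) := by
            rw [add_mul, inv_mul_cancel₀ (hTpos l).ne']
    have hcover : A k ∩ A l ⊆ ⋃ i : Fin (t k), ⋃ j ∈ S i, ball (γpt l j) (ρ l) := by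
      rintro x ⟨hxk, hxl⟩
      simp only [hAdef, Set.mem_iUnion] at hxk hxl
      obtain ⟨i, hi⟩ := hxk
      obtain ⟨j, hj⟩ := hxl
      simp only [mem_ball, padic_dist_eq] at hi hj
      have hjS : j ∈ S i := by
        simp only [hS, Finset.mem_filter]
        refine ⟨Finset.mem_univ _, ?_⟩
        calc ‖γpt l j - γpt k i‖ = ‖(γpt l j - x) + (x - γpt k i)‖ := by ring_nf
          _ ≤ max ‖γpt l j - x‖ ‖x - γpt k i‖ := IsUltrametricDist.norm_add_le_max _ _
          _ < ρ k := by
              apply max_lt _ (lt_of_lt_of_le hi le_rfl)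
              rw [show ‖γpt l j - x‖ = ‖x - γpt l j‖ by rw [← norm_neg]; ring_nf]
              exact lt_of_lt_of_le hj (hρanti k l hkl)
      exact Set.mem_iUnion.2 ⟨i, Set.mem_biUnion hjS (by
        simp only [mem_ball, padic_dist_eq]; exact hj)⟩
    have hsum_ne : ∀ i : Fin (t k), (∑ j ∈ S i, μ (ball (γpt l j) (ρ l))) ≠ ⊤ := by
      intro i
      rw [← lt_top_iff_ne_top]
      apply ENNReal.sum_lt_top.2
      intro j _
      exact lt_top_iff_ne_top.2 (padic_meas_ball_ne_top μ _ _)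
    have h1 : μ (A k ∩ A l) ≤ ∑ i : Fin (t k), ∑ j ∈ S i, μ (ball (γpt l j) (ρ l)) := by
      refine (measure_mono hcover).trans ?_
      refine (measure_iUnion_fintype_le _ _).trans ?_
      exact Finset.sum_le_sum (fun i _ => measure_biUnion_finset_le _ _)
    have h2 : (μ (A k ∩ A l)).toReal ≤
        ∑ i : Fin (t k), ∑ j ∈ S i, (μ (ball (γpt l j) (ρ l))).toReal := by
      refine le_trans (ENNReal.toReal_mono ?_ h1) ?_
      · rw [← lt_top_iff_ne_top]
        apply ENNReal.sum_lt_top.2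
        intro i _
        exact lt_top_iff_ne_top.2 (hsum_ne i)
      · rw [ENNReal.toReal_sum (fun i _ => hsum_ne i)]
        apply Finset.sum_le_sum
        intro i _
        rw [ENNReal.toReal_sum (fun j _ => padic_meas_ball_ne_top μ _ _)]
    have h3 : ∑ i : Fin (t k), ∑ j ∈ S i, (μ (ball (γpt l j) (ρ l))).toReal ≤
        (t k : ℝ) * (p * (ρ k * T l + 1)) * (ρ l * V) := by
      calc ∑ i : Fin (t k), ∑ j ∈ S i, (μ (ball (γpt l j) (ρ l))).toReal
          ≤ ∑ _i : Fin (t k), (p * (ρ k * T l + 1)) * (ρ l * V) := by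
            apply Finset.sum_le_sum
            intro i _
            calc ∑ j ∈ S i, (μ (ball (γpt l j) (ρ l))).toReal
                ≤ ∑ _j ∈ S i, (ρ l * V) :=
                  Finset.sum_le_sum (fun j _ => padic_meas_ball_le μ _ _ (hρpos l))
              _ = ((S i).card : ℝ) * (ρ l * V) := by rw [Finset.sum_const, nsmul_eq_mul]
              _ ≤ (p * (ρ k * T l + 1)) * (ρ l * V) :=
                  mul_le_mul_of_nonneg_right (hcard i)
                    (mul_nonneg (hρpos l).le hVpos.le)
        _ = (t k : ℝ) * (p * (ρ k * T l + 1)) * (ρ l * V) := by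
            rw [Finset.sum_const, Finset.card_univ, Fintype.card_fin, nsmul_eq_mul]; ring
    refine le_trans h2 (le_trans h3 ?_)
    have hrV : r * V ≤ p * μIr := hrle
    have hx1 : (0:ℝ) ≤ ρ l * V := mul_nonneg (hρpos l).le hVpos.le
    have hx2 : (0:ℝ) ≤ p * (ρ k * T l + 1) :=
      mul_nonneg hp0.le (by nlinarith [hρpos k, hTpos l])
    have e1 : (t k : ℝ) * (p * (ρ k * T l + 1)) * (ρ l * V)
        ≤ (p * r * T k) * (p * (ρ k * T l + 1)) * (ρ l * V) :=
      mul_le_mul_of_nonneg_right (mul_le_mul_of_nonneg_right (htk k) hx2) hx1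
    refine le_trans e1 ?_
    have e2 : (p * r * T k) * (p * (ρ k * T l + 1)) * (ρ l * V)
        = (p:ℝ)^2 * T k * (ρ k * T l + 1) * ρ l * (r * V) := by ring
    rw [e2]
    calc (p:ℝ)^2 * T k * (ρ k * T l + 1) * ρ l * (r * V)
        ≤ (p:ℝ)^2 * T k * (ρ k * T l + 1) * ρ l * (p * μIr) := by
          apply mul_le_mul_of_nonneg_left hrV
          have h4 : (0:ℝ) < ρ k * T l + 1 := by nlinarith [hρpos k, hTpos l]
          exact mul_nonneg (mul_nonneg (mul_nonneg (by positivity) (hTpos k).le) h4.le)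
            (hρpos l).le
      _ = p^3 * μIr * (T k * ρ k * (T l * ρ l) + T k * ρ l) := by ring
      _ = p^3 * μIr * (a' k * a' l + T k * ρ l) := rfl
  -- double sums
  have hpair_all : ∀ k l, (μ (A k ∩ A l)).toReal ≤
      p^3 * μIr * (a' k * a' l + (if k ≤ l then T k * ρ l else 0)
        + (if l ≤ k then T l * ρ k else 0)) := by
    intro k l
    rcases le_total k l with hkl | hlk
    · refine le_trans (hApair k l hkl) ?_
      rw [if_pos hkl]
      apply mul_le_mul_of_nonneg_left _ (by positivity)
      have : (0:ℝ) ≤ (if l ≤ k then T l * ρ k else 0) := by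
        split
        · exact mul_nonneg (hTpos l).le (hρpos k).le
        · exact le_refl 0
      linarith
    · rw [Set.inter_comm]
      refine le_trans (hApair l k hlk) ?_
      rw [if_pos hlk]
      apply mul_le_mul_of_nonneg_left _ (by positivity)
      have : (0:ℝ) ≤ (if k ≤ l then T k * ρ l else 0) := by
        split
        · exact mul_nonneg (hTpos k).le (hρpos l).le
        · exact le_refl 0
      have hcomm : a' l * a' k = a' k * a' l := mul_comm _ _
      linarith
  have hesum : ∀ F : Finset ℕ,
      ∑ k ∈ F, ∑ l ∈ F, (if k ≤ l then T k * ρ l else 0) ≤ 2 * ∑ k ∈ F, a' k := by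
    intro F
    rw [Finset.sum_comm]
    calc ∑ l ∈ F, ∑ k ∈ F, (if k ≤ l then T k * ρ l else 0)
        ≤ ∑ l ∈ F, 2 * a' l := by
          apply Finset.sum_le_sum
          intro l _
          have : ∑ k ∈ F, (if k ≤ l then T k * ρ l else 0)
              = (∑ k ∈ F.filter (· ≤ l), T k) * ρ l := by
            rw [Finset.sum_mul, Finset.sum_filter]
          rw [this]
          calc (∑ k ∈ F.filter (· ≤ l), T k) * ρ l ≤ (2 * T l) * ρ l :=
                mul_le_mul_of_nonneg_right (hTsum l F) (hρpos l).le
            _ = 2 * a' l := by rw [ha'def]; ring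
      _ = 2 * ∑ l ∈ F, a' l := by rw [Finset.mul_sum]
  -- the union over a finite window has large measure
  set c : ℝ := c₁ * c₁ / (5 * p^3) with hcdef2
  have hwindow : ∀ n m : ℕ, 1 ≤ ∑ k ∈ Finset.Ico n m, a' k →
      ENNReal.ofReal (c * μIr) ≤ μ (⋃ k ∈ Finset.Ico n m, A k) := by
    intro n m hM
    set F := Finset.Ico n m with hF
    set M := ∑ k ∈ F, a' k with hM2
    have hMpos : 0 < M := lt_of_lt_of_le one_pos hM
    set U := ⋃ k ∈ F, A k with hU
    have hUI : U ⊆ I := by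
      rw [hU]
      exact Set.iUnion₂_subset (fun k _ => hAI k)
    have hUne : μ U ≠ ⊤ := (lt_of_le_of_lt (measure_mono hUI)
      (lt_top_iff_ne_top.2 hμIlt)).ne
    have hCE := chung_erdos μ F A hAmeas
    have hPne : (∑ k ∈ F, μ (A k)) ≠ ⊤ := by
      rw [← lt_top_iff_ne_top]
      apply ENNReal.sum_lt_top.2
      intro k _
      exact lt_top_iff_ne_top.2 (hAne_top k)
    have hQkl_ne : ∀ k l, μ (A k ∩ A l) ≠ ⊤ := fun k l =>
      (lt_of_le_of_lt (measure_mono (Set.inter_subset_left.trans (hAI k)))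
        (lt_top_iff_ne_top.2 hμIlt)).ne
    have hQne : (∑ k ∈ F, ∑ l ∈ F, μ (A k ∩ A l)) ≠ ⊤ := by
      rw [← lt_top_iff_ne_top]
      apply ENNReal.sum_lt_top.2
      intro k _
      apply ENNReal.sum_lt_top.2
      intro l _
      exact lt_top_iff_ne_top.2 (hQkl_ne k l)
    set Pr := (∑ k ∈ F, μ (A k)).toReal with hPr
    set Qr := (∑ k ∈ F, ∑ l ∈ F, μ (A k ∩ A l)).toReal with hQr
    have hPrlow : c₁ * M * μIr ≤ Pr := by
      rw [hPr, ENNReal.toReal_sum (fun k _ => hAne_top k)]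
      calc c₁ * M * μIr = ∑ k ∈ F, c₁ * a' k * μIr := by
            rw [hM2, Finset.mul_sum, Finset.sum_mul]
        _ ≤ ∑ k ∈ F, (μ (A k)).toReal := Finset.sum_le_sum (fun k _ => hAlow k)
    have hQrup : Qr ≤ p^3 * μIr * (M * M + 4 * M) := by
      rw [hQr, ENNReal.toReal_sum (fun k _ => by
        rw [← lt_top_iff_ne_top]
        apply ENNReal.sum_lt_top.2
        intro l _
        exact lt_top_iff_ne_top.2 (hQkl_ne k l))]
      calc ∑ k ∈ F, (∑ l ∈ F, μ (A k ∩ A l)).toReal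
          = ∑ k ∈ F, ∑ l ∈ F, (μ (A k ∩ A l)).toReal := by
            apply Finset.sum_congr rfl
            intro k _
            rw [ENNReal.toReal_sum (fun l _ => hQkl_ne k l)]
        _ ≤ ∑ k ∈ F, ∑ l ∈ F, p^3 * μIr * (a' k * a' l
              + (if k ≤ l then T k * ρ l else 0) + (if l ≤ k then T l * ρ k else 0)) :=
            Finset.sum_le_sum (fun k _ => Finset.sum_le_sum (fun l _ => hpair_all k l))
        _ = p^3 * μIr * ((∑ k ∈ F, ∑ l ∈ F, a' k * a' l)
              + (∑ k ∈ F, ∑ l ∈ F, (if k ≤ l then T k * ρ l else 0))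
              + (∑ k ∈ F, ∑ l ∈ F, (if l ≤ k then T l * ρ k else 0))) := by
            rw [← Finset.sum_add_distrib, ← Finset.sum_add_distrib, Finset.mul_sum]
            apply Finset.sum_congr rfl
            intro k _
            rw [← Finset.sum_add_distrib, ← Finset.sum_add_distrib, Finset.mul_sum]
        _ ≤ p^3 * μIr * (M * M + 2 * M + 2 * M) := by
            apply mul_le_mul_of_nonneg_left _ (by positivity)
            have e1 : ∑ k ∈ F, ∑ l ∈ F, a' k * a' l = M * M := by
              rw [hM2, Finset.sum_mul_sum]
            have e2 := hesum F
            have e3 : ∑ k ∈ F, ∑ l ∈ F, (if l ≤ k then T l * ρ k else 0) ≤ 2 * M := by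
              rw [Finset.sum_comm]
              exact hesum F
            rw [e1]
            linarith
        _ = p^3 * μIr * (M * M + 4 * M) := by ring
    -- conclude
    have hQr5 : Qr ≤ 5 * p^3 * μIr * (M * M) := by
      refine le_trans hQrup ?_
      have h5 : M * M + 4 * M ≤ 5 * (M * M) := by nlinarith
      calc p^3 * μIr * (M * M + 4 * M) ≤ p^3 * μIr * (5 * (M * M)) :=
            mul_le_mul_of_nonneg_left h5 (by positivity)
        _ = 5 * p^3 * μIr * (M * M) := by ring
    have hCEr : Pr^2 ≤ (μ U).toReal * Qr := by
      have h1 : ((∑ k ∈ F, μ (A k))^2).toReal ≤ (μ U * ∑ k ∈ F, ∑ l ∈ F, μ (A k ∩ A l)).toReal := by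
        apply ENNReal.toReal_mono _ hCE
        exact ENNReal.mul_ne_top hUne hQne
      rw [ENNReal.toReal_pow, ENNReal.toReal_mul] at h1
      exact h1
    have hQrpos : 0 < Qr := by
      by_contra hq
      push_neg at hq
      have hq0 : Qr = 0 := le_antisymm hq (ENNReal.toReal_nonneg)
      rw [hq0, mul_zero] at hCEr
      nlinarith [hPrlow, mul_pos (mul_pos hc₁pos hMpos) hμIpos]
    have hfinal : c * μIr ≤ (μ U).toReal := by
      have h1 : c * μIr * Qr ≤ (c₁ * M * μIr)^2 := by
        calc c * μIr * Qr ≤ c * μIr * (5 * p^3 * μIr * (M * M)) := by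
              apply mul_le_mul_of_nonneg_left hQr5
              have hcpos : 0 < c := by rw [hcdef2]; positivity
              exact mul_nonneg hcpos.le hμIpos.le
          _ = (c₁ * M * μIr)^2 := by
              rw [hcdef2]
              field_simp
      have h2 : (c₁ * M * μIr)^2 ≤ Pr^2 :=
        pow_le_pow_left₀ (by positivity) hPrlow 2
      have h3 : c * μIr * Qr ≤ (μ U).toReal * Qr := le_trans h1 (le_trans h2 hCEr)
      exact le_of_mul_le_mul_right h3 hQrpos
    calc ENNReal.ofReal (c * μIr) ≤ ENNReal.ofReal ((μ U).toReal) :=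
          ENNReal.ofReal_le_ofReal hfinal
      _ = μ U := ENNReal.ofReal_toReal hUne
  -- tail unions
  set Un : ℕ → Set ℚ_[p] := fun n => ⋃ (k : ℕ) (_ : n ≤ k), A k with hUndef
  have hUnI : ∀ n, Un n ⊆ I := by
    intro n
    rw [hUndef]
    exact Set.iUnion₂_subset (fun k _ => hAI k)
  have hUnlow : ∀ n, ENNReal.ofReal (c * μIr) ≤ μ (Un n) := by
    intro n
    have hshift : ¬ Summable (fun j : ℕ => a' (n + j)) := by
      intro hs
      exact ha'div ((summable_nat_add_iff n).1 (by
        apply hs.congr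
        intro j
        rw [Nat.add_comm]))
    have htend := (not_summable_iff_tendsto_nat_atTop_of_nonneg
      (fun j => (ha'pos (n + j)).le)).1 hshift
    obtain ⟨m0, hm0⟩ := (Filter.tendsto_atTop.1 htend 1).exists
    have hM : 1 ≤ ∑ k ∈ Finset.Ico n (n + m0), a' k := by
      refine le_trans hm0 (le_of_eq ?_)
      rw [Finset.sum_Ico_eq_sum_range]
      simp
    refine le_trans (hwindow n (n + m0) hM) (measure_mono ?_)
    intro x hx
    obtain ⟨k, hk, hxk⟩ := Set.mem_iUnion₂.1 hx
    exact Set.mem_iUnion₂.2 ⟨k, (Finset.mem_Ico.1 hk).1, hxk⟩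
  set L : Set ℚ_[p] := ⋂ n, Un n with hLdef
  have hLmeas : μ L = ⨅ n, μ (Un n) := by
    apply Directed.measure_iInter
    · intro n
      apply MeasurableSet.nullMeasurableSet
      exact MeasurableSet.iUnion (fun k => MeasurableSet.iUnion (fun _ => hAmeas k))
    · intro m n
      refine ⟨max m n, ?_, ?_⟩
      · intro x hx
        obtain ⟨k, hk, hxk⟩ := Set.mem_iUnion₂.1 hx
        exact Set.mem_iUnion₂.2 ⟨k, le_trans (le_max_left m n) hk, hxk⟩
      · intro x hx
        obtain ⟨k, hk, hxk⟩ := Set.mem_iUnion₂.1 hx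
        exact Set.mem_iUnion₂.2 ⟨k, le_trans (le_max_right m n) hk, hxk⟩
    · exact ⟨0, (lt_of_le_of_lt (measure_mono (hUnI 0)) (lt_top_iff_ne_top.2 hμIlt)).ne⟩
  have hLlow : ENNReal.ofReal (c * μIr) ≤ μ L := by
    rw [hLmeas]
    exact le_iInf hUnlow
  -- points of L (outside Γ) lie in the limsup set
  have hLsub : L \ Γ ⊆ {ω | {γ ∈ Γ | ‖ω - γ‖ < Ψ (N γ)}.Infinite} ∩ I := by
    rintro x ⟨hxL, hxΓ⟩
    have hxI : x ∈ I := hUnI 0 (by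
      rw [hLdef] at hxL
      exact Set.mem_iInter.1 hxL 0)
    refine ⟨?_, hxI⟩
    simp only [Set.mem_setOf_eq]
    by_contra hfin
    rw [Set.not_infinite] at hfin
    obtain ⟨ε, hεpos, hεle⟩ : ∃ ε > 0, ∀ γ ∈ {γ ∈ Γ | ‖x - γ‖ < Ψ (N γ)}, ε ≤ ‖x - γ‖ := by
      rcases Set.eq_empty_or_nonempty {γ ∈ Γ | ‖x - γ‖ < Ψ (N γ)} with he | hne
      · exact ⟨1, one_pos, by rw [he]; simp⟩
      · set s := hfin.toFinset.image (fun γ => ‖x - γ‖) with hs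
        have hsne : s.Nonempty := by
          apply Finset.image_nonempty.2
          rwa [Set.Finite.toFinset_nonempty]
        refine ⟨s.min' hsne, ?_, ?_⟩
        · obtain ⟨γ₀, hγ₀, hmin⟩ := Finset.mem_image.1 (s.min'_mem hsne)
          rw [← hmin]
          rw [Set.Finite.mem_toFinset] at hγ₀
          have : x ≠ γ₀ := fun hxy => hxΓ (hxy ▸ hγ₀.1)
          simpa [norm_pos_iff, sub_ne_zero] using this
        · intro γ hγ
          apply Finset.min'_le
          apply Finset.mem_image_of_mem
          rwa [Set.Finite.mem_toFinset]
    obtain ⟨n, hn⟩ : ∃ n : ℕ, ε⁻¹ < 2^n := pow_unbounded_of_one_lt ε⁻¹ one_lt_two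
    have hTn : ε⁻¹ < T n := lt_of_lt_of_le hn (by
      calc (2:ℝ)^n = 1 * 2^n := (one_mul _).symm
        _ ≤ T₁ * 2^n := mul_le_mul_of_nonneg_right hT₁1 (by positivity))
    have hTninv : (T n)⁻¹ < ε := by
      rw [← inv_inv ε]
      exact inv_strictAnti₀ (inv_pos.2 hεpos) hTn
    have hxUn : x ∈ Un n := by
      rw [hLdef] at hxL
      exact Set.mem_iInter.1 hxL n
    rw [hUndef] at hxUn
    simp only [Set.mem_iUnion, exists_prop] at hxUn
    obtain ⟨k, hkn, hxk⟩ := hxUn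
    simp only [hAdef, Set.mem_iUnion] at hxk
    obtain ⟨i, hi⟩ := hxk
    simp only [mem_ball, padic_dist_eq] at hi
    set g := γpt k i with hg
    have hgΓ : g ∈ Γ := (hmem k i).1
    have hgG : g ∈ {γ ∈ Γ | ‖x - γ‖ < Ψ (N γ)} := by
      refine ⟨hgΓ, ?_⟩
      calc ‖x - g‖ < ρ k := hi
        _ ≤ Ψ (T k) := min_le_left _ _
        _ ≤ Ψ (N g) := hΨmono _ _ (hN g hgΓ) (hNle k i)
    have h1 : ε ≤ ‖x - g‖ := hεle g hgG
    have h2 : ‖x - g‖ < ε := by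
      calc ‖x - g‖ < ρ k := hi
        _ ≤ (T k)⁻¹ := hρinv k
        _ ≤ (T n)⁻¹ := inv_anti₀ (hTpos n) (hTmono n k hkn)
        _ < ε := hTninv
    linarith
  -- conclude
  have hΓ0 : μ Γ = 0 := by
    have : Γ = ⋃ x ∈ Γ, ({x} : Set ℚ_[p]) := (Set.biUnion_of_singleton Γ).symm
    rw [this]
    exact (measure_biUnion_null_iff hΓ).2 (fun x _ => padic_singleton_null μ x)
  calc ENNReal.ofReal (c * μIr) ≤ μ L := hLlow
    _ = μ (L \ Γ) := (measure_diff_null hΓ0).symm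
    _ ≤ μ ({ω | {γ ∈ Γ | ‖ω - γ‖ < Ψ (N γ)}.Infinite} ∩ I) := measure_mono hLsub

lemma padic_unifLocDoubling : IsUnifLocDoublingMeasure μ := by
  constructor
  refine ⟨(p : ℝ≥0), ?_⟩
  filter_upwards [self_mem_nhdsWithin] with ε hε
  intro x
  have hε0 : (0:ℝ) < ε := hε
  have h2ε : (0:ℝ) < 2*ε := by linarith
  have hp1 : (1:ℝ) < p := by exact_mod_cast (Fact.out : p.Prime).one_lt
  have hp2 : (2:ℝ) ≤ p := by exact_mod_cast (Fact.out : p.Prime).two_le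
  have hlog : Int.log p (2*ε) ≤ Int.log p ε + 1 := by
    have h1 : (p:ℝ)^(Int.log p (2*ε)) < (p:ℝ)^(Int.log p ε + 2) := by
      calc (p:ℝ)^(Int.log p (2*ε)) ≤ 2*ε :=
            Int.zpow_log_le_self (Fact.out : p.Prime).one_lt h2ε
        _ ≤ p * ε := by nlinarith
        _ < p * (p:ℝ)^(Int.log p ε + 1) := by
            apply mul_lt_mul_of_pos_left _ (by linarith)
            exact Int.lt_zpow_succ_log_self (Fact.out : p.Prime).one_lt ε
        _ = (p:ℝ)^(Int.log p ε + 2) := by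
            have hpne : (p:ℝ) ≠ 0 := by linarith
            have h2 : (p:ℝ)^(2:ℤ) = p * p := by
              rw [show (2:ℤ) = 1 + 1 by norm_num, zpow_add₀ hpne, zpow_one]
            rw [zpow_add₀ hpne (Int.log p ε) 2, zpow_add₀ hpne (Int.log p ε) 1, zpow_one, h2]
            ring
    have := (zpow_lt_zpow_iff_right₀ hp1).1 h1
    omega
  have e1 := padic_closedBall_eq_zpow (2*ε) h2ε x
  have e2 := padic_closedBall_eq_zpow ε hε0 x
  have hcast : ((p : ℝ≥0) : ℝ≥0∞) = (p : ℝ≥0∞) := by norm_cast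
  rw [hcast]
  calc μ (closedBall x (2*ε)) = μ (closedBall x ((p:ℝ)^(Int.log p (2*ε)))) := by rw [← e1]
    _ ≤ μ (closedBall x ((p:ℝ)^(Int.log p ε + 1))) :=
        measure_mono (closedBall_subset_closedBall (zpow_le_zpow_right₀ hp1.le hlog))
    _ = μ (closedBall (0:ℚ_[p]) ((p:ℝ)^(Int.log p ε + 1))) :=
        padic_meas_closedBall_translate μ _ _
    _ = p * μ (closedBall (0:ℚ_[p]) ((p:ℝ)^(Int.log p ε))) := padic_meas_closedBall_succ μ _
    _ = p * μ (closedBall x ((p:ℝ)^(Int.log p ε))) := by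
        rw [padic_meas_closedBall_translate μ x]
    _ = p * μ (closedBall x ε) := by rw [← e2]

theorem stmt_19_aux (μ : Measure ℚ_[p]) [μ.IsAddHaarMeasure]
    (K₀ : Set ℚ_[p]) (hK₀ : IsPadicDisc p K₀)
    (Γ : Set ℚ_[p]) (hΓ : Γ.Countable) (N : ℚ_[p] → ℝ) (hN : ∀ γ ∈ Γ, 0 < N γ)
    (hreg : IsRegularSystem p μ K₀ Γ N)
    (Ψ : ℝ → ℝ) (hΨpos : ∀ x : ℝ, 0 < x → 0 < Ψ x)
    (hΨmono : ∀ x y : ℝ, 0 < x → x ≤ y → Ψ y ≤ Ψ x)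
    (hdiv : ¬ Summable (fun h : ℕ => Ψ (h + 1))) :
    μ (K₀ \ {ω ∈ K₀ | {γ ∈ Γ | ‖ω - γ‖ < Ψ (N γ)}.Infinite}) = 0 := by
  classical
  obtain ⟨a₀, r₀, hr₀, hK₀eq⟩ := hK₀
  have hK₀ball : K₀ = ball a₀ r₀ := by
    rw [hK₀eq]; ext x; simp only [Set.mem_setOf_eq, mem_ball, padic_dist_eq]
  have hp0 : (0:ℝ) < p := by exact_mod_cast (Fact.out : p.Prime).pos
  -- Γ is infinite
  have hΓinf : Γ.Infinite := by
    intro hfin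
    haveI := hfin.fintype
    obtain ⟨C, hC, hregK⟩ := hreg
    obtain ⟨T₀, hT₀⟩ := hregK K₀ subset_rfl ⟨a₀, r₀, hr₀, hK₀eq⟩
    have hμK₀pos : 0 < (μ K₀).toReal := by
      apply ENNReal.toReal_pos
      · rw [hK₀ball]
        exact (isOpen_ball.measure_pos μ ⟨a₀, mem_ball_self hr₀⟩).ne'
      · rw [hK₀ball]
        exact padic_meas_ball_ne_top μ a₀ r₀
    set n := Fintype.card ↥Γ
    set T := max T₀ (((n:ℝ)+1) / (C * (μ K₀).toReal) + 1) with hTdef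
    obtain ⟨t, γ, hγmem, _, hγsep, hγcount⟩ := hT₀ T (le_max_left _ _)
    have hTpos : 0 < T := by
      apply lt_of_lt_of_le _ (le_max_right _ _)
      positivity
    have htn : (n:ℝ) < t := by
      have h1 : ((n:ℝ)+1) / (C * (μ K₀).toReal) + 1 ≤ T := le_max_right _ _
      have h2 : (n:ℝ) + 1 ≤ C * T * (μ K₀).toReal := by
        rw [div_add' _ _ _ (by positivity)] at h1
        rw [div_le_iff₀ (by positivity)] at h1
        nlinarith
      linarith [hγcount]
    have hinj : Function.Injective (fun i => (⟨γ i, (hγmem i).1⟩ : ↥Γ)) := by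
      intro i j hij
      by_contra hne
      have := hγsep i j hne
      have hγeq : γ i = γ j := congrArg Subtype.val hij
      rw [hγeq, sub_self, norm_zero] at this
      have : (0:ℝ) < T⁻¹ := inv_pos.2 hTpos
      linarith
    have := Fintype.card_le_of_injective _ hinj
    rw [Fintype.card_fin] at this
    have : (t:ℝ) ≤ n := by exact_mod_cast this
    linarith
  -- enumerate Γ
  haveI := hΓ.to_subtype
  haveI := hΓinf.to_subtype
  obtain ⟨dΓ⟩ : Nonempty (Denumerable ↥Γ) :=
    nonempty_denumerable_iff.2 ⟨inferInstance, inferInstance⟩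
  set e : ↥Γ ≃ ℕ := Denumerable.eqv ↥Γ with he
  set γseq : ℕ → ℚ_[p] := fun n => ((e.symm n : ↥Γ) : ℚ_[p]) with hγseq
  have hγseqΓ : ∀ n, γseq n ∈ Γ := fun n => (e.symm n).2
  have hγseq_inj : Function.Injective γseq := by
    intro m n h
    have h2 : e.symm m = e.symm n := Subtype.ext h
    exact e.symm.injective h2
  have hsurj : ∀ γ ∈ Γ, ∃ n, γseq n = γ := by
    intro γ hγ
    refine ⟨e ⟨γ, hγ⟩, ?_⟩
    rw [hγseq]
    simp
  set W := {ω : ℚ_[p] | {γ ∈ Γ | ‖ω - γ‖ < Ψ (N γ)}.Infinite} with hWdef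
  have hWeq : W = ⋂ m, ⋃ n, ⋃ (_ : m ≤ n), ball (γseq n) (Ψ (N (γseq n))) := by
    ext x
    simp only [hWdef, Set.mem_setOf_eq, Set.mem_iInter, Set.mem_iUnion, mem_ball, exists_prop]
    constructor
    · intro hinf m
      set Q := {n : ℕ | ‖x - γseq n‖ < Ψ (N (γseq n))} with hQ
      have hQinf : Q.Infinite := by
        intro hQfin
        apply hinf
        apply Set.Finite.subset (hQfin.image γseq)
        rintro γ ⟨hγΓ, hγlt⟩
        obtain ⟨k, hk⟩ := hsurj γ hγΓ
        exact ⟨k, by rw [hQ]; simp only [Set.mem_setOf_eq]; rw [hk]; exact hγlt, hk⟩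
      obtain ⟨k, hkQ, hmk⟩ := hQinf.exists_gt m
      refine ⟨k, hmk.le, ?_⟩
      rw [show dist x (γseq k) = ‖x - γseq k‖ from rfl]
      exact hkQ
    · intro h
      have hQinf : {n : ℕ | ‖x - γseq n‖ < Ψ (N (γseq n))}.Infinite := by
        rw [← Nat.frequently_atTop_iff_infinite, Filter.frequently_atTop]
        intro m
        obtain ⟨k, hmk, hk⟩ := h m
        exact ⟨k, hmk, hk⟩
      have himg := hQinf.image (Set.injOn_of_injective hγseq_inj)
      apply himg.mono
      rintro γ ⟨k, hk, rfl⟩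
      exact ⟨hγseqΓ k, hk⟩
  have hWmeas : MeasurableSet W := by
    rw [hWeq]
    exact MeasurableSet.iInter fun m => MeasurableSet.iUnion fun n =>
      MeasurableSet.iUnion fun _ => measurableSet_ball
  have hgoal : K₀ \ {ω ∈ K₀ | {γ ∈ Γ | ‖ω - γ‖ < Ψ (N γ)}.Infinite} = K₀ \ W := by
    ext x
    simp only [Set.mem_diff, Set.mem_setOf_eq, hWdef]
    tauto
  rw [hgoal]
  set S := K₀ \ W with hSdef
  have hK₀meas : MeasurableSet K₀ := by rw [hK₀ball]; exact measurableSet_ball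
  have hSmeas : MeasurableSet S := hK₀meas.diff hWmeas
  by_contra hS0
  obtain ⟨c, hcpos, hkey⟩ := key_disc μ K₀ Γ hΓ N hN hreg Ψ hΨpos hΨmono hdiv
  set c' := min c (1/2:ℝ) with hc'
  have hc'pos : 0 < c' := lt_min hcpos (by norm_num)
  have hc'lt1 : c' < 1 := lt_of_le_of_lt (min_le_right _ _) (by norm_num)
  haveI hdbl : IsUnifLocDoublingMeasure μ := padic_unifLocDoubling μ
  have hae := IsUnifLocDoublingMeasure.ae_tendsto_measure_inter_div μ S 1
  have hSne : μ.restrict S ≠ 0 := by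
    intro h
    apply hS0
    rw [← Measure.restrict_apply_univ, h]
    simp
  haveI : (ae (μ.restrict S)).NeBot := ae_neBot.2 hSne
  obtain ⟨x, hxΦ, hxS⟩ := (hae.and (ae_restrict_mem hSmeas)).exists
  set δ : ℕ → ℝ := fun j => r₀ / p / (j+1) with hδdef
  have hδpos : ∀ j : ℕ, 0 < δ j := by
    intro j
    rw [hδdef]
    positivity
  have hδtend : Filter.Tendsto δ Filter.atTop (nhdsWithin 0 (Set.Ioi 0)) := by
    rw [tendsto_nhdsWithin_iff]
    constructor
    · have h1 : Filter.Tendsto (fun j : ℕ => 1 / ((j:ℝ)+1)) Filter.atTop (nhds 0) :=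
        tendsto_one_div_add_atTop_nhds_zero_nat
      have h2 := h1.const_mul (r₀ / p)
      rw [mul_zero] at h2
      apply h2.congr
      intro j
      rw [hδdef]
      field_simp
    · exact Filter.Eventually.of_forall (fun j => hδpos j)
  have hxcb : ∀ᶠ j in Filter.atTop, x ∈ closedBall x (1 * δ j) := by
    apply Filter.Eventually.of_forall
    intro j
    rw [mem_closedBall, dist_self, one_mul]
    exact (hδpos j).le
  have hlim := hxΦ (fun _ => x) δ hδtend hxcb
  have hbound : ∀ j : ℕ, μ (S ∩ closedBall x (δ j)) / μ (closedBall x (δ j))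
      ≤ ENNReal.ofReal (1 - c') := by
    intro j
    set m := Int.log p (δ j) with hm
    have e1 : closedBall x (δ j) = ball x ((p:ℝ)^(m+1)) := by
      rw [padic_closedBall_eq_zpow (δ j) (hδpos j) x, padic_closedBall_eq_ball]
    set I := ball x ((p:ℝ)^(m+1)) with hIdef
    have hρ'pos : (0:ℝ) < (p:ℝ)^(m+1) := by positivity
    have hρ'le : (p:ℝ)^(m+1) ≤ r₀ := by
      have h1 : (p:ℝ)^m ≤ δ j := Int.zpow_log_le_self (Fact.out : p.Prime).one_lt (hδpos j)
      have h2 : δ j ≤ r₀ / p := by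
        rw [hδdef]
        apply div_le_self (by positivity)
        have : (1:ℝ) ≤ (j:ℝ) + 1 := by
          have : (0:ℝ) ≤ (j:ℝ) := Nat.cast_nonneg j
          linarith
        exact this
      calc (p:ℝ)^(m+1) = (p:ℝ)^m * p := by
            rw [zpow_add₀ (by positivity : (p:ℝ) ≠ 0), zpow_one]
        _ ≤ (r₀ / p) * p := by
            apply mul_le_mul_of_nonneg_right (le_trans h1 h2) hp0.le
        _ = r₀ := by field_simp
    have hIK₀ : I ⊆ K₀ := by
      rw [hK₀ball]
      have hx0 : x ∈ ball a₀ r₀ := by rw [← hK₀ball]; exact hxS.1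
      rw [IsUltrametricDist.ball_eq_of_mem hx0]
      exact ball_subset_ball hρ'le
    have hdisc : IsPadicDisc p I := ⟨x, (p:ℝ)^(m+1), hρ'pos, by
      ext y
      simp only [hIdef, mem_ball, padic_dist_eq, Set.mem_setOf_eq]⟩
    have hWI := hkey I hIK₀ hdisc
    have hμIne : μ I ≠ ⊤ := by rw [hIdef]; exact padic_meas_ball_ne_top μ _ _
    have hμIpos : 0 < (μ I).toReal := ENNReal.toReal_pos
      (by rw [hIdef]; exact (isOpen_ball.measure_pos μ ⟨x, mem_ball_self hρ'pos⟩).ne') hμIne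
    set μIr := (μ I).toReal with hμIrdef
    have hWIne : μ (W ∩ I) ≠ ⊤ :=
      ne_of_lt (lt_of_le_of_lt (measure_mono Set.inter_subset_right)
        (lt_top_iff_ne_top.2 hμIne))
    have hWI' : ENNReal.ofReal (c * μIr) ≤ μ (W ∩ I) := by
      rw [hWdef]
      exact hWI
    have hSI : μ (S ∩ closedBall x (δ j)) ≤ μ I - μ (W ∩ I) := by
      rw [e1]
      calc μ (S ∩ ball x ((p:ℝ)^(m+1))) ≤ μ (I \ (W ∩ I)) :=
            measure_mono (fun y hy => ⟨hy.2, fun hyW => hy.1.2 hyW.1⟩)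
        _ = μ I - μ (W ∩ I) := measure_diff Set.inter_subset_right
            ((hWmeas.inter (by rw [hIdef]; exact measurableSet_ball)).nullMeasurableSet) hWIne
    have hnum : μ I - μ (W ∩ I) ≤ ENNReal.ofReal ((1-c') * μIr) := by
      have ha : ENNReal.ofReal (c' * μIr) ≤ μ (W ∩ I) := by
        refine le_trans (ENNReal.ofReal_le_ofReal ?_) hWI'
        exact mul_le_mul_of_nonneg_right (min_le_left _ _) hμIpos.le
      calc μ I - μ (W ∩ I) ≤ μ I - ENNReal.ofReal (c' * μIr) := tsub_le_tsub_left ha _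
        _ = ENNReal.ofReal μIr - ENNReal.ofReal (c' * μIr) := by
            rw [ENNReal.ofReal_toReal hμIne]
        _ = ENNReal.ofReal (μIr - c' * μIr) :=
            (ENNReal.ofReal_sub _ (mul_nonneg hc'pos.le hμIpos.le)).symm
        _ = ENNReal.ofReal ((1-c') * μIr) := by
            congr 1
            ring
    have hden : μ (closedBall x (δ j)) = μ I := by rw [e1]
    rw [hden]
    calc μ (S ∩ closedBall x (δ j)) / μ I ≤ ENNReal.ofReal ((1-c')*μIr) / μ I :=
          ENNReal.div_le_div_right (le_trans hSI hnum) _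
      _ = ENNReal.ofReal ((1-c')*μIr) / ENNReal.ofReal μIr := by
          rw [ENNReal.ofReal_toReal hμIne]
      _ = ENNReal.ofReal ((1-c')*μIr / μIr) := (ENNReal.ofReal_div_of_pos hμIpos).symm
      _ = ENNReal.ofReal (1-c') := by
          rw [mul_div_assoc, div_self hμIpos.ne', mul_one]
  have h1le := le_of_tendsto hlim (Filter.Eventually.of_forall hbound)
  have h2 : ENNReal.ofReal (1 - c') < 1 := ENNReal.ofReal_lt_one.2 (by linarith)
  exact absurd h1le (not_le.2 h2)


end Aux

theorem stmt_19 [MeasurableSpace ℚ_[p]] [BorelSpace ℚ_[p]]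
    (μ : Measure ℚ_[p]) [μ.IsAddHaarMeasure]
    (K₀ : Set ℚ_[p]) (hK₀ : IsPadicDisc p K₀)
    (Γ : Set ℚ_[p]) (hΓ : Γ.Countable) (N : ℚ_[p] → ℝ) (hN : ∀ γ ∈ Γ, 0 < N γ)
    (hreg : IsRegularSystem p μ K₀ Γ N)
    (Ψ : ℝ → ℝ) (hΨpos : ∀ x : ℝ, 0 < x → 0 < Ψ x)
    (hΨmono : ∀ x y : ℝ, 0 < x → x ≤ y → Ψ y ≤ Ψ x)
    (hdiv : ¬ Summable (fun h : ℕ => Ψ (h + 1))) :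
    μ (K₀ \ {ω ∈ K₀ | {γ ∈ Γ | ‖ω - γ‖ < Ψ (N γ)}.Infinite}) = 0 :=
  stmt_19_aux μ K₀ hK₀ Γ hΓ N hN hreg Ψ hΨpos hΨmono hdiv
end
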